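/- arXiv:2103.13071 — 7 statements merged into one kernel-verified Lean document; each statement's English description precedes it below -/
import Mathlib

section
/- Let H be a separable complex Hilbert space and let A : ℝ → B(H) be continuous in the operator norm with sup_{ξ∈ℝ} ‖A(ξ)‖ < ∞, and let T be the induced bounded operator on L²(ℝ; H), (Tf)(ξ) = A(ξ)(f(ξ)). Then for every λ ∈ ℂ the operator T − λI is invertible in the algebra of bounded operators on L²(ℝ; H) if and only if A(ξ) − λI is invertible in B(H) for every ξ ∈ ℝ and M := sup_{ξ∈ℝ} ‖(A(ξ) − λI)⁻¹‖ < ∞; moreover, in that case ‖(T − λI)⁻¹‖ ≤ M. -/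
open MeasureTheory
open scoped ENNReal NNReal
set_option maxHeartbeats 1000000
set_option synthInstance.maxHeartbeats 200000

noncomputable section

namespace Stmt1Aux

variable {H : Type*} [NormedAddCommGroup H] [InnerProductSpace ℂ H]
  [CompleteSpace H] [SecondCountableTopology H]

lemma aesm (B : ℝ → H →L[ℂ] H) (hB : Continuous B) (f : Lp H 2 (volume : Measure ℝ)) :
    AEStronglyMeasurable (fun ξ => B ξ (f ξ)) (volume : Measure ℝ) :=
  (ContinuousLinearMap.id ℂ (H →L[ℂ] H)).aestronglyMeasurable_comp₂
    hB.aestronglyMeasurable (Lp.aestronglyMeasurable f)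

lemma memLp (B : ℝ → H →L[ℂ] H) (hB : Continuous B) {M : ℝ} (hM : ∀ ξ, ‖B ξ‖ ≤ M)
    (f : Lp H 2 (volume : Measure ℝ)) :
    MemLp (fun ξ => B ξ (f ξ)) 2 (volume : Measure ℝ) :=
  (Lp.memLp f).of_le_mul (aesm B hB f)
    (Filter.Eventually.of_forall fun ξ =>
      ((B ξ).le_opNorm _).trans (mul_le_mul_of_nonneg_right (hM ξ) (norm_nonneg _)))

/-- The multiplication operator on `L²(ℝ; H)` induced by a continuous uniformly bounded
family of operators. -/
def mulOp (B : ℝ → H →L[ℂ] H) (hB : Continuous B) {M : ℝ} (hM0 : 0 ≤ M)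
    (hM : ∀ ξ, ‖B ξ‖ ≤ M) :
    Lp H 2 (volume : Measure ℝ) →L[ℂ] Lp H 2 (volume : Measure ℝ) :=
  LinearMap.mkContinuous
    { toFun := fun f => (memLp B hB hM f).toLp _
      map_add' := fun f g => Lp.ext <| by
        filter_upwards [MemLp.coeFn_toLp (memLp B hB hM (f + g)),
          Lp.coeFn_add ((memLp B hB hM f).toLp _) ((memLp B hB hM g).toLp _),
          MemLp.coeFn_toLp (memLp B hB hM f), MemLp.coeFn_toLp (memLp B hB hM g),
          Lp.coeFn_add f g] with ξ h1 h2 h3 h4 h5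
        rw [h1, h2, Pi.add_apply, h3, h4, h5, Pi.add_apply, map_add]
      map_smul' := fun c f => Lp.ext <| by
        filter_upwards [MemLp.coeFn_toLp (memLp B hB hM (c • f)),
          Lp.coeFn_smul c ((memLp B hB hM f).toLp _),
          MemLp.coeFn_toLp (memLp B hB hM f), Lp.coeFn_smul c f] with ξ h1 h2 h3 h4
        simp only [RingHom.id_apply]
        rw [h1, h2, Pi.smul_apply, h3, h4, Pi.smul_apply, (B ξ).map_smul] }
    M
    (fun f => by
      show ‖(memLp B hB hM f).toLp _‖ ≤ M * ‖f‖
      have h1 : eLpNorm (fun ξ => B ξ (f ξ)) 2 (volume : Measure ℝ)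
          ≤ ENNReal.ofReal M * eLpNorm f 2 (volume : Measure ℝ) :=
        eLpNorm_le_mul_eLpNorm_of_ae_le_mul
          (Filter.Eventually.of_forall fun ξ =>
            ((B ξ).le_opNorm _).trans (mul_le_mul_of_nonneg_right (hM ξ) (norm_nonneg _))) 2
      have h2 : (ENNReal.ofReal M * eLpNorm f 2 (volume : Measure ℝ)) ≠ ⊤ :=
        ENNReal.mul_ne_top ENNReal.ofReal_ne_top (Lp.eLpNorm_ne_top f)
      calc ‖(memLp B hB hM f).toLp _‖
          = (eLpNorm (fun ξ => B ξ (f ξ)) 2 (volume : Measure ℝ)).toReal :=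
            Lp.norm_toLp _ (memLp B hB hM f)
        _ ≤ (ENNReal.ofReal M * eLpNorm f 2 (volume : Measure ℝ)).toReal :=
            ENNReal.toReal_mono h2 h1
        _ = M * ‖f‖ := by
            rw [ENNReal.toReal_mul, ENNReal.toReal_ofReal hM0, Lp.norm_def])

lemma mulOp_coeFn (B : ℝ → H →L[ℂ] H) (hB : Continuous B) {M : ℝ} (hM0 : 0 ≤ M)
    (hM : ∀ ξ, ‖B ξ‖ ≤ M) (f : Lp H 2 (volume : Measure ℝ)) :
    (mulOp B hB hM0 hM f : ℝ → H) =ᵐ[volume] fun ξ => B ξ (f ξ) :=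
  MemLp.coeFn_toLp (memLp B hB hM f)

lemma mulOp_norm_le (B : ℝ → H →L[ℂ] H) (hB : Continuous B) {M : ℝ} (hM0 : 0 ≤ M)
    (hM : ∀ ξ, ‖B ξ‖ ≤ M) : ‖mulOp B hB hM0 hM‖ ≤ M :=
  LinearMap.mkContinuous_norm_le _ hM0 _


/-- Pointwise lower bound: if the multiplication operator is bounded below, so is each fiber. -/
lemma lower (B : ℝ → H →L[ℂ] H) (hB : Continuous B)
    (Tb : Lp H 2 (volume : Measure ℝ) →L[ℂ] Lp H 2 (volume : Measure ℝ))
    (hTb : ∀ f : Lp H 2 (volume : Measure ℝ),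
      (Tb f : ℝ → H) =ᵐ[volume] fun ξ => B ξ (f ξ))
    {K : ℝ} (hK : 0 ≤ K) (hlow : ∀ f, ‖f‖ ≤ K * ‖Tb f‖) (ξ₀ : ℝ) (v : H) :
    ‖v‖ ≤ K * ‖B ξ₀ v‖ := by
  refine le_of_forall_pos_le_add fun ε hε => ?_
  have hD : (0:ℝ) < (K + 1) * (‖v‖ + 1) := by positivity
  set ε' : ℝ := ε / ((K + 1) * (‖v‖ + 1)) with hε'def
  have hε' : 0 < ε' := div_pos hε hD
  obtain ⟨δ, hδ, hδc⟩ := Metric.continuousAt_iff.mp (hB.continuousAt (x := ξ₀)) ε' hε'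
  set s : Set ℝ := Set.Ioo ξ₀ (ξ₀ + δ) with hsdef
  have hsm : MeasurableSet s := measurableSet_Ioo
  have hμs : (volume : Measure ℝ) s = ENNReal.ofReal δ := by
    rw [hsdef, Real.volume_Ioo]; ring_nf
  have hμs' : (volume : Measure ℝ) s ≠ ⊤ := by rw [hμs]; exact ENNReal.ofReal_ne_top
  set d : ℝ := ((volume : Measure ℝ) s).toReal ^ (1 / (2:ℝ≥0∞).toReal) with hddef
  have hd : 0 < d := by
    rw [hddef, hμs, ENNReal.toReal_ofReal hδ.le]
    positivity
  set c : ℝ := ‖B ξ₀ v‖ + ε' * ‖v‖ with hcdef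
  have hc0 : 0 ≤ c := by positivity
  set f : Lp H 2 (volume : Measure ℝ) := indicatorConstLp 2 hsm hμs' v with hfdef
  have hfn : ‖f‖ = ‖v‖ * d := by
    rw [hfdef, norm_indicatorConstLp (by norm_num) (by norm_num)]; rfl
  set I : Lp ℝ 2 (volume : Measure ℝ) := indicatorConstLp 2 hsm hμs' c with hIdef
  have hIn : ‖I‖ = c * d := by
    rw [hIdef, norm_indicatorConstLp (by norm_num) (by norm_num), Real.norm_eq_abs,
      abs_of_nonneg hc0]; rfl
  have hbound : ∀ᵐ ξ ∂(volume : Measure ℝ), ‖(Tb f : ℝ → H) ξ‖ ≤ ‖(I : ℝ → ℝ) ξ‖ := by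
    filter_upwards [hTb f, indicatorConstLp_coeFn (p := 2) (hs := hsm) (hμs := hμs') (c := v),
      indicatorConstLp_coeFn (p := 2) (hs := hsm) (hμs := hμs') (c := c)] with ξ h1 h2 h3
    rw [h1, h2, h3]
    by_cases hξ : ξ ∈ s
    · rw [Set.indicator_of_mem hξ, Set.indicator_of_mem hξ, Real.norm_eq_abs,
        abs_of_nonneg hc0]
      have hdist : dist ξ ξ₀ < δ := by
        rw [Real.dist_eq, abs_of_pos (by linarith [hξ.1] : (0:ℝ) < ξ - ξ₀)]
        linarith [hξ.2]
      have h4 : ‖B ξ v - B ξ₀ v‖ ≤ ε' * ‖v‖ := by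
        have h5 : ‖(B ξ - B ξ₀) v‖ ≤ ‖B ξ - B ξ₀‖ * ‖v‖ := (B ξ - B ξ₀).le_opNorm v
        rw [ContinuousLinearMap.sub_apply] at h5
        refine h5.trans (mul_le_mul_of_nonneg_right ?_ (norm_nonneg v))
        have := hδc hdist
        rw [dist_eq_norm] at this
        exact this.le
      calc ‖B ξ v‖ = ‖B ξ₀ v + (B ξ v - B ξ₀ v)‖ := by rw [add_sub_cancel]
        _ ≤ ‖B ξ₀ v‖ + ‖B ξ v - B ξ₀ v‖ := norm_add_le _ _
        _ ≤ c := by rw [hcdef]; linarith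
    · rw [Set.indicator_of_notMem hξ, Set.indicator_of_notMem hξ]
      simp
  have hTbf : ‖Tb f‖ ≤ ‖I‖ := by
    rw [Lp.norm_def, Lp.norm_def]
    exact ENNReal.toReal_mono (Lp.eLpNorm_ne_top I) (eLpNorm_mono_ae hbound)
  have hmain : ‖v‖ * d ≤ K * (c * d) := by
    calc ‖v‖ * d = ‖f‖ := hfn.symm
      _ ≤ K * ‖Tb f‖ := hlow f
      _ ≤ K * ‖I‖ := mul_le_mul_of_nonneg_left hTbf hK
      _ = K * (c * d) := by rw [hIn]
  have hvc : ‖v‖ ≤ K * c := by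
    have := (mul_le_mul_iff_of_pos_right hd).mp (by linarith [hmain] : ‖v‖ * d ≤ (K * c) * d)
    exact this
  have hKe : K * ε' * ‖v‖ ≤ ε := by
    have h6 : K * ‖v‖ ≤ (K + 1) * (‖v‖ + 1) := by nlinarith [norm_nonneg v]
    have h7 : K * ε' * ‖v‖ = ε * (K * ‖v‖) / ((K + 1) * (‖v‖ + 1)) := by
      rw [hε'def]; ring
    rw [h7, div_le_iff₀ hD]
    calc ε * (K * ‖v‖) ≤ ε * ((K + 1) * (‖v‖ + 1)) :=
          mul_le_mul_of_nonneg_left h6 hε.le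
      _ = ε * ((K + 1) * (‖v‖ + 1)) := rfl
  calc ‖v‖ ≤ K * c := hvc
    _ = K * ‖B ξ₀ v‖ + K * ε' * ‖v‖ := by rw [hcdef]; ring
    _ ≤ K * ‖B ξ₀ v‖ + ε := by linarith

/-- Each fiber operator is surjective when the multiplication operator is invertible. -/
lemma surj (B : ℝ → H →L[ℂ] H) (hB : Continuous B)
    (Tb : Lp H 2 (volume : Measure ℝ) →L[ℂ] Lp H 2 (volume : Measure ℝ))
    (hTb : ∀ f : Lp H 2 (volume : Measure ℝ),
      (Tb f : ℝ → H) =ᵐ[volume] fun ξ => B ξ (f ξ))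
    {K : ℝ} (hK : 0 ≤ K)
    (hinv : ∀ h : Lp H 2 (volume : Measure ℝ), ∃ g, Tb g = h ∧ ‖g‖ ≤ K * ‖h‖)
    (hlow : ∀ f, ‖f‖ ≤ K * ‖Tb f‖) (ξ₀ : ℝ) :
    Function.Surjective (B ξ₀) := by
  intro w
  have anti : AntilipschitzWith (⟨K, hK⟩ : ℝ≥0) (B ξ₀) :=
    (B ξ₀).antilipschitz_of_bound fun x => lower B hB Tb hTb hK hlow ξ₀ x
  have hclosed : IsClosed (Set.range (B ξ₀)) :=
    anti.isClosed_range (B ξ₀).uniformContinuous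
  have hmem : w ∈ closure (Set.range (B ξ₀)) := by
    rw [Metric.mem_closure_iff]
    intro ε hε
    set c : ℝ := K * ‖w‖ + 1 with hcdef
    have hc : (0:ℝ) < c := by positivity
    set ε' : ℝ := ε / (2 * c) with hε'def
    have hε' : 0 < ε' := div_pos hε (by positivity)
    obtain ⟨δ, hδ, hδc⟩ := Metric.continuousAt_iff.mp (hB.continuousAt (x := ξ₀)) ε' hε'
    set s : Set ℝ := Set.Ioo ξ₀ (ξ₀ + δ) with hsdef
    have hsm : MeasurableSet s := measurableSet_Ioo
    have hμs : (volume : Measure ℝ) s = ENNReal.ofReal δ := by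
      rw [hsdef, Real.volume_Ioo]; ring_nf
    have hμs' : (volume : Measure ℝ) s ≠ ⊤ := by rw [hμs]; exact ENNReal.ofReal_ne_top
    set d : ℝ := ((volume : Measure ℝ) s).toReal ^ (1 / (2:ℝ≥0∞).toReal) with hddef
    have hd : 0 < d := by
      rw [hddef, hμs, ENNReal.toReal_ofReal hδ.le]; positivity
    set f : Lp H 2 (volume : Measure ℝ) := indicatorConstLp 2 hsm hμs' w with hfdef
    have hfn : ‖f‖ = ‖w‖ * d := by
      rw [hfdef, norm_indicatorConstLp (by norm_num) (by norm_num)]; rfl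
    obtain ⟨g, hg, hgn⟩ := hinv f
    have hae : ∀ᵐ ξ ∂(volume : Measure ℝ),
        B ξ ((g : ℝ → H) ξ) = s.indicator (fun _ => w) ξ := by
      have h1 : (Tb g : ℝ → H) =ᵐ[volume] (f : ℝ → H) := by rw [hg]
      filter_upwards [hTb g, h1,
        indicatorConstLp_coeFn (p := 2) (hs := hsm) (hμs := hμs') (c := w)] with ξ e1 e2 e3
      rw [← e1, e2, e3]
    have hZ : ¬ (∀ᵐ ξ ∂(volume : Measure ℝ), ξ ∈ s → c < ‖(g : ℝ → H) ξ‖) := by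
      intro hcon
      have hIle : ‖(indicatorConstLp 2 hsm hμs' c : Lp ℝ 2 (volume : Measure ℝ))‖ ≤ ‖g‖ := by
        rw [Lp.norm_def, Lp.norm_def]
        refine ENNReal.toReal_mono (Lp.eLpNorm_ne_top g) (eLpNorm_mono_ae ?_)
        filter_upwards [indicatorConstLp_coeFn (p := 2) (hs := hsm) (hμs := hμs') (c := c),
          hcon] with ξ h1 h2
        rw [h1]
        by_cases hξ : ξ ∈ s
        · rw [Set.indicator_of_mem hξ, Real.norm_eq_abs, abs_of_nonneg hc.le]
          exact (h2 hξ).le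
        · rw [Set.indicator_of_notMem hξ]; simp
      have hIn : ‖(indicatorConstLp 2 hsm hμs' c : Lp ℝ 2 (volume : Measure ℝ))‖ = c * d := by
        rw [norm_indicatorConstLp (by norm_num) (by norm_num), Real.norm_eq_abs,
          abs_of_nonneg hc.le]; rfl
      have : c * d ≤ K * ‖w‖ * d := by
        calc c * d = _ := hIn.symm
          _ ≤ ‖g‖ := hIle
          _ ≤ K * ‖f‖ := hgn
          _ = K * ‖w‖ * d := by rw [hfn]; ring
      have hle := (mul_le_mul_iff_of_pos_right hd).mp this
      rw [hcdef] at hle; linarith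
    have hfreq := (Filter.not_eventually.mp hZ).and_eventually hae
    obtain ⟨ξ, hξ1, hξ2⟩ := hfreq.exists
    push_neg at hξ1
    obtain ⟨hξs, hgle⟩ := hξ1
    rw [Set.indicator_of_mem hξs] at hξ2
    refine ⟨B ξ₀ ((g : ℝ → H) ξ), Set.mem_range_self _, ?_⟩
    have hdist : dist ξ ξ₀ < δ := by
      rw [Real.dist_eq, abs_of_pos (by linarith [hξs.1] : (0:ℝ) < ξ - ξ₀)]
      linarith [hξs.2]
    have h5 : ‖B ξ ((g : ℝ → H) ξ) - B ξ₀ ((g : ℝ → H) ξ)‖ ≤ ε' * c := by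
      have h6 : ‖(B ξ - B ξ₀) ((g : ℝ → H) ξ)‖ ≤ ‖B ξ - B ξ₀‖ * ‖(g : ℝ → H) ξ‖ :=
        (B ξ - B ξ₀).le_opNorm _
      rw [ContinuousLinearMap.sub_apply] at h6
      refine h6.trans ?_
      have h7 := hδc hdist
      rw [dist_eq_norm] at h7
      exact mul_le_mul h7.le hgle (norm_nonneg _) hε'.le
    rw [dist_eq_norm, ← hξ2]
    calc ‖B ξ ((g : ℝ → H) ξ) - B ξ₀ ((g : ℝ → H) ξ)‖ ≤ ε' * c := h5
      _ = ε / 2 := by rw [hε'def]; field_simp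
      _ < ε := by linarith
  rw [hclosed.closure_eq] at hmem
  exact hmem

/-- Invertibility of each fiber, with norm control, from invertibility of the
multiplication operator. -/
lemma isUnit_and_norm (B : ℝ → H →L[ℂ] H) (hB : Continuous B)
    (Tb : Lp H 2 (volume : Measure ℝ) →L[ℂ] Lp H 2 (volume : Measure ℝ))
    (hTb : ∀ f : Lp H 2 (volume : Measure ℝ),
      (Tb f : ℝ → H) =ᵐ[volume] fun ξ => B ξ (f ξ))
    {K : ℝ} (hK : 0 ≤ K)
    (hinv : ∀ h : Lp H 2 (volume : Measure ℝ), ∃ g, Tb g = h ∧ ‖g‖ ≤ K * ‖h‖)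
    (hlow : ∀ f, ‖f‖ ≤ K * ‖Tb f‖) (ξ₀ : ℝ) :
    IsUnit (B ξ₀) ∧ ‖Ring.inverse (B ξ₀)‖ ≤ K := by
  have hsurj := surj B hB Tb hTb hK hinv hlow ξ₀
  have hinj : Function.Injective (B ξ₀) := by
    intro x y hxy
    have h1 := lower B hB Tb hTb hK hlow ξ₀ (x - y)
    rw [map_sub, hxy, sub_self, norm_zero, mul_zero] at h1
    exact sub_eq_zero.mp (norm_le_zero_iff.mp h1)
  have hu : IsUnit (B ξ₀) := ContinuousLinearMap.isUnit_iff_bijective.mpr ⟨hinj, hsurj⟩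
  refine ⟨hu, ContinuousLinearMap.opNorm_le_bound _ hK fun w => ?_⟩
  have h1 : B ξ₀ (Ring.inverse (B ξ₀) w) = w := by
    rw [← ContinuousLinearMap.mul_apply, Ring.mul_inverse_cancel _ hu,
      ContinuousLinearMap.one_apply]
  calc ‖Ring.inverse (B ξ₀) w‖ ≤ K * ‖B ξ₀ (Ring.inverse (B ξ₀) w)‖ :=
        lower B hB Tb hTb hK hlow ξ₀ _
    _ = K * ‖w‖ := by rw [h1]

end Stmt1Aux


end

/-- Let `H` be a separable complex Hilbert space, `A : ℝ → B(H)` norm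
continuous with `sup_ξ ‖A ξ‖ < ∞`, and `T` the induced bounded operator on `L²(ℝ; H)`,
`(T f)(ξ) = A ξ (f ξ)`. Then for every `λ ∈ ℂ`, `T - λI` is invertible in the bounded
operators on `L²(ℝ; H)` iff `A ξ - λI` is invertible for every `ξ` and
`M := sup_ξ ‖(A ξ - λI)⁻¹‖ < ∞`; moreover in that case `‖(T - λI)⁻¹‖ ≤ M`. -/
theorem stmt_1 {H : Type*} [NormedAddCommGroup H] [InnerProductSpace ℂ H]
    [CompleteSpace H] [SecondCountableTopology H]
    (A : ℝ → H →L[ℂ] H) (hcont : Continuous A)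
    (C : ℝ) (hC : ∀ ξ : ℝ, ‖A ξ‖ ≤ C)
    (T : Lp H 2 (volume : Measure ℝ) →L[ℂ] Lp H 2 (volume : Measure ℝ))
    (hT : ∀ f : Lp H 2 (volume : Measure ℝ),
      (T f : ℝ → H) =ᵐ[volume] fun ξ : ℝ => A ξ (f ξ))
    (lam : ℂ) :
    (IsUnit (T - lam • 1) ↔
      ((∀ ξ : ℝ, IsUnit (A ξ - lam • 1)) ∧
        BddAbove (Set.range fun ξ : ℝ => ‖Ring.inverse (A ξ - lam • 1)‖))) ∧
    (IsUnit (T - lam • 1) →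
      ‖Ring.inverse (T - lam • 1)‖ ≤ ⨆ ξ : ℝ, ‖Ring.inverse (A ξ - lam • 1)‖) := by
  classical
  set Tlam := T - lam • 1 with hTlamdef
  have hBc : Continuous (fun ξ : ℝ => A ξ - lam • 1) := hcont.sub continuous_const
  set B : ℝ → H →L[ℂ] H := fun ξ => A ξ - lam • 1 with hBdef
  have hBa : ∀ ξ, A ξ - lam • 1 = B ξ := fun _ => rfl
  simp_rw [hBa]
  have hTlamF : ∀ f : Lp H 2 (volume : Measure ℝ),
      (Tlam f : ℝ → H) =ᵐ[volume] fun ξ => B ξ (f ξ) := by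
    intro f
    have heq : Tlam f = T f - lam • f := by
      rw [hTlamdef]
      simp [ContinuousLinearMap.sub_apply, ContinuousLinearMap.smul_apply,
        ContinuousLinearMap.one_apply]
    rw [heq]
    filter_upwards [hT f, Lp.coeFn_sub (T f) (lam • f), Lp.coeFn_smul lam f]
      with ξ e1 e2 e3
    rw [e2, Pi.sub_apply, e1, e3, Pi.smul_apply]
    simp [hBdef, ContinuousLinearMap.sub_apply, ContinuousLinearMap.smul_apply,
      ContinuousLinearMap.one_apply]
  -- forward direction
  have fwd : ∀ _ : IsUnit Tlam, ∀ ξ : ℝ,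
      IsUnit (B ξ) ∧ ‖Ring.inverse (B ξ)‖ ≤ ‖Ring.inverse Tlam‖ := by
    intro hu ξ
    set S := Ring.inverse Tlam with hSdef
    have hST : S * Tlam = 1 := Ring.inverse_mul_cancel _ hu
    have hTS : Tlam * S = 1 := Ring.mul_inverse_cancel _ hu
    have hlow : ∀ f, ‖f‖ ≤ ‖S‖ * ‖Tlam f‖ := by
      intro f
      have h1 : S (Tlam f) = f := by
        rw [← ContinuousLinearMap.mul_apply, hST, ContinuousLinearMap.one_apply]
      calc ‖f‖ = ‖S (Tlam f)‖ := by rw [h1]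
        _ ≤ ‖S‖ * ‖Tlam f‖ := S.le_opNorm _
    have hinv : ∀ h : Lp H 2 (volume : Measure ℝ), ∃ g, Tlam g = h ∧ ‖g‖ ≤ ‖S‖ * ‖h‖ := by
      intro h
      refine ⟨S h, ?_, S.le_opNorm h⟩
      rw [← ContinuousLinearMap.mul_apply, hTS, ContinuousLinearMap.one_apply]
    exact Stmt1Aux.isUnit_and_norm B hBc Tlam hTlamF (norm_nonneg S) hinv hlow ξ
  -- backward direction: construction of the inverse
  have bwd : ∀ _ : (∀ ξ : ℝ, IsUnit (B ξ)),
      ∀ _ : BddAbove (Set.range fun ξ : ℝ => ‖Ring.inverse (B ξ)‖),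
      ∃ S' : Lp H 2 (volume : Measure ℝ) →L[ℂ] Lp H 2 (volume : Measure ℝ),
        Tlam * S' = 1 ∧ S' * Tlam = 1 ∧ ‖S'‖ ≤ ⨆ ξ : ℝ, ‖Ring.inverse (B ξ)‖ := by
    intro h1 h2
    have hBinvc : Continuous (fun ξ => Ring.inverse (B ξ)) := by
      rw [continuous_iff_continuousAt]
      intro ξ
      exact ((h1 ξ).unit_spec ▸ NormedRing.inverse_continuousAt (h1 ξ).unit).comp
        hBc.continuousAt
    have hMle : ∀ ξ, ‖Ring.inverse (B ξ)‖ ≤ ⨆ ξ : ℝ, ‖Ring.inverse (B ξ)‖ :=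
      fun ξ => le_ciSup h2 ξ
    have hM0 : 0 ≤ ⨆ ξ : ℝ, ‖Ring.inverse (B ξ)‖ := (norm_nonneg _).trans (hMle 0)
    set S' := Stmt1Aux.mulOp (fun ξ => Ring.inverse (B ξ)) hBinvc hM0 hMle with hS'def
    refine ⟨S', ?_, ?_, Stmt1Aux.mulOp_norm_le _ _ _ _⟩
    · refine ContinuousLinearMap.ext fun f => ?_
      rw [ContinuousLinearMap.mul_apply, ContinuousLinearMap.one_apply]
      refine Lp.ext ?_
      filter_upwards [hTlamF (S' f),
        Stmt1Aux.mulOp_coeFn (fun ξ => Ring.inverse (B ξ)) hBinvc hM0 hMle f] with ξ e1 e2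
      rw [e1, e2, ← ContinuousLinearMap.mul_apply, Ring.mul_inverse_cancel _ (h1 ξ),
        ContinuousLinearMap.one_apply]
    · refine ContinuousLinearMap.ext fun f => ?_
      rw [ContinuousLinearMap.mul_apply, ContinuousLinearMap.one_apply]
      refine Lp.ext ?_
      filter_upwards [Stmt1Aux.mulOp_coeFn (fun ξ => Ring.inverse (B ξ)) hBinvc hM0 hMle
        (Tlam f), hTlamF f] with ξ e1 e2
      rw [e1, e2, ← ContinuousLinearMap.mul_apply, Ring.inverse_mul_cancel _ (h1 ξ),
        ContinuousLinearMap.one_apply]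
  constructor
  · constructor
    · intro hu
      refine ⟨fun ξ => (fwd hu ξ).1, ⟨‖Ring.inverse Tlam‖, ?_⟩⟩
      rintro x ⟨ξ, rfl⟩
      exact (fwd hu ξ).2
    · rintro ⟨h1, h2⟩
      obtain ⟨S', hTS, hST, _⟩ := bwd h1 h2
      exact ⟨⟨Tlam, S', hTS, hST⟩, rfl⟩
  · intro hu
    have h1 : ∀ ξ : ℝ, IsUnit (B ξ) := fun ξ => (fwd hu ξ).1
    have h2 : BddAbove (Set.range fun ξ : ℝ => ‖Ring.inverse (B ξ)‖) := by
      refine ⟨‖Ring.inverse Tlam‖, ?_⟩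
      rintro x ⟨ξ, rfl⟩
      exact (fwd hu ξ).2
    obtain ⟨S', hTS, hST, hnorm⟩ := bwd h1 h2
    have hRi : Ring.inverse Tlam = S' := by
      simpa using Ring.inverse_unit (⟨Tlam, S', hTS, hST⟩ : (Lp H 2 (volume : Measure ℝ) →L[ℂ] Lp H 2 (volume : Measure ℝ))ˣ)
    rw [hRi]
    exact hnorm
end

section
/- For every z ∈ ℂ with 1 < Re z < 2 there exists a constant C > 0 (depending only on z) such that for every a ∈ [−1, 1) the function t ↦ t^{z−1} (t² − 2at + 1)^{−1/2} · t^{−1} is absolutely integrable on (0, ∞) and |∫₀^∞ t^{z−1} (t² − 2at + 1)^{−1/2} dt/t + log((1−a)/2)| ≤ C. -/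
open MeasureTheory Real

lemma qa_pos {a t : ℝ} (ha : a ∈ Set.Ico (-1:ℝ) 1) (ht : 0 < t) :
    0 < t^2 - 2*a*t + 1 := by
  obtain ⟨ha1, ha2⟩ := ha
  nlinarith [sq_nonneg (t - 1), mul_pos ht (by linarith : (0:ℝ) < 1 - a)]

lemma ga_pos {a t : ℝ} (ha : a ∈ Set.Ico (-1:ℝ) 1) (ht : 0 < t) :
    0 < t - a + Real.sqrt (t^2 - 2*a*t + 1) := by
  obtain ⟨ha1, ha2⟩ := ha
  rcases le_or_gt a t with h | h
  · have := Real.sqrt_pos.2 (qa_pos ⟨ha1, ha2⟩ ht)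
    linarith
  · have h1 : (a - t)^2 < t^2 - 2*a*t + 1 := by nlinarith
    have h2 : a - t < Real.sqrt (t^2 - 2*a*t + 1) := by
      have := Real.lt_sqrt (le_of_lt (sub_pos.2 h)) |>.2 h1
      exact this
    linarith

lemma ftc_mid {a : ℝ} (ha : a ∈ Set.Ico (-1:ℝ) 1) :
    ∫ t in (1/2 : ℝ)..(3/2), ((t^2 - 2*a*t + 1) ^ (-(1:ℝ)/2) : ℝ)
      = Real.log (3/2 - a + Real.sqrt (13/4 - 3*a))
        - Real.log (1/2 - a + Real.sqrt (5/4 - a)) := by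
  have key : ∀ t ∈ Set.uIcc (1/2 : ℝ) (3/2), HasDerivAt
      (fun t : ℝ => Real.log (t - a + Real.sqrt (t^2 - 2*a*t + 1)))
      ((t^2 - 2*a*t + 1) ^ (-(1:ℝ)/2)) t := by
    intro t ht
    rw [Set.uIcc_of_le (by norm_num)] at ht
    have htpos : (0:ℝ) < t := lt_of_lt_of_le (by norm_num) ht.1
    have hQ : 0 < t^2 - 2*a*t + 1 := qa_pos ha htpos
    have hG : 0 < t - a + Real.sqrt (t^2 - 2*a*t + 1) := ga_pos ha htpos
    have hsq : 0 < Real.sqrt (t^2 - 2*a*t + 1) := Real.sqrt_pos.2 hQ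
    have hQd : HasDerivAt (fun t : ℝ => t^2 - 2*a*t + 1) (2*t - 2*a) t := by
      have h1 : HasDerivAt (fun t : ℝ => t^2) (2*t) t := by
        simpa using hasDerivAt_pow 2 t
      have h2 : HasDerivAt (fun t : ℝ => 2*a*t) (2*a) t := by
        simpa using (hasDerivAt_id t).const_mul (2*a)
      simpa using (h1.sub h2).add_const 1
    have hsd : HasDerivAt (fun t : ℝ => Real.sqrt (t^2 - 2*a*t + 1))
        ((2*t - 2*a) / (2 * Real.sqrt (t^2 - 2*a*t + 1))) t := hQd.sqrt hQ.ne'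
    have hGd : HasDerivAt (fun t : ℝ => t - a + Real.sqrt (t^2 - 2*a*t + 1))
        (1 + (2*t - 2*a) / (2 * Real.sqrt (t^2 - 2*a*t + 1))) t := by
      exact ((hasDerivAt_id t).sub_const a).add hsd
    have := hGd.log hG.ne'
    convert this using 1
    rw [neg_div, Real.rpow_neg hQ.le, ← Real.sqrt_eq_rpow]
    have hs2 : Real.sqrt (t^2 - 2*a*t + 1) * Real.sqrt (t^2 - 2*a*t + 1)
        = t^2 - 2*a*t + 1 := Real.mul_self_sqrt hQ.le
    rw [eq_div_iff hG.ne']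
    generalize Real.sqrt (t^2 - 2*a*t + 1) = S at hsq hG ⊢
    field_simp
    ring
  have hcont : ContinuousOn (fun t : ℝ => ((t^2 - 2*a*t + 1) ^ (-(1:ℝ)/2) : ℝ))
      (Set.uIcc (1/2 : ℝ) (3/2)) := by
    intro t ht
    rw [Set.uIcc_of_le (by norm_num)] at ht
    have htpos : (0:ℝ) < t := lt_of_lt_of_le (by norm_num) ht.1
    have hQ : 0 < t^2 - 2*a*t + 1 := qa_pos ha htpos
    have hc1 : ContinuousAt (fun t : ℝ => t^2 - 2*a*t + 1) t := by fun_prop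
    exact (hc1.rpow_const (Or.inl hQ.ne')).continuousWithinAt
  have := intervalIntegral.integral_eq_sub_of_hasDerivAt key hcont.intervalIntegrable
  rw [this]
  norm_num
  ring_nf

lemma mid_log_bound {a : ℝ} (ha : a ∈ Set.Ico (-1:ℝ) 1) :
    |Real.log (3/2 - a + Real.sqrt (13/4 - 3*a))
      - Real.log (1/2 - a + Real.sqrt (5/4 - a)) + Real.log ((1-a)/2)| ≤ 4 := by
  obtain ⟨ha1, ha2⟩ := ha
  set s : ℝ := (1-a)/2 with hs
  have hs0 : 0 < s := by simp only [hs]; linarith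
  set G1 : ℝ := 1/2 - a + Real.sqrt (5/4 - a) with hG1
  set G2 : ℝ := 3/2 - a + Real.sqrt (13/4 - 3*a) with hG2
  have h2lo : 1 ≤ G2 := by
    have : (1/2 : ℝ) ≤ Real.sqrt (13/4 - 3*a) := by
      rw [show (1/2:ℝ) = Real.sqrt ((1/2)^2) by
        rw [Real.sqrt_sq (by norm_num)]]
      exact Real.sqrt_le_sqrt (by nlinarith)
    simp only [hG2]; linarith
  have h2hi : G2 ≤ 5 := by
    have : Real.sqrt (13/4 - 3*a) ≤ 5/2 := by
      rw [show (5/2:ℝ) = Real.sqrt ((5/2)^2) by rw [Real.sqrt_sq (by norm_num)]]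
      exact Real.sqrt_le_sqrt (by nlinarith)
    simp only [hG2]; linarith
  have h1lo : 3*s ≤ G1 := by
    have : 1 - a/2 ≤ Real.sqrt (5/4 - a) := by
      rw [show (1 - a/2 : ℝ) = Real.sqrt ((1 - a/2)^2) by
        rw [Real.sqrt_sq (by linarith)]]
      exact Real.sqrt_le_sqrt (by nlinarith)
    simp only [hG1, hs]; linarith
  have h1hi : G1 ≤ 4*s := by
    have : Real.sqrt (5/4 - a) ≤ 3/2 - a := by
      rw [show (3/2 - a : ℝ) = Real.sqrt ((3/2 - a)^2) by
        rw [Real.sqrt_sq (by linarith)]]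
      exact Real.sqrt_le_sqrt (by nlinarith)
    simp only [hG1, hs]; linarith
  have hG1pos : 0 < G1 := lt_of_lt_of_le (by linarith) h1lo
  have hkey : Real.log G1 - Real.log s = Real.log (G1 / s) :=
    (Real.log_div hG1pos.ne' hs0.ne').symm
  have hratlo : (3:ℝ) ≤ G1 / s := (le_div_iff₀ hs0).2 (by linarith)
  have hrathi : G1 / s ≤ 4 := (div_le_iff₀ hs0).2 h1hi
  have e1 : 0 ≤ Real.log G2 := Real.log_nonneg h2lo
  have e2 : Real.log G2 ≤ Real.log 5 := Real.log_le_log (by linarith) h2hi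
  have e3 : 0 ≤ Real.log (G1 / s) := Real.log_nonneg (by linarith)
  have e4 : Real.log (G1 / s) ≤ Real.log 4 := Real.log_le_log (by linarith) hrathi
  have l5 : Real.log 5 ≤ 4 := by linarith [Real.log_le_sub_one_of_pos (by norm_num : (0:ℝ) < 5)]
  have l4 : Real.log 4 ≤ 4 := by linarith [Real.log_le_sub_one_of_pos (by norm_num : (0:ℝ) < 4)]
  have : Real.log G2 - Real.log G1 + Real.log s = Real.log G2 - Real.log (G1 / s) := by
    rw [← hkey]; ring
  rw [this, abs_le]
  constructor <;> linarith

lemma cpow_lip {z : ℂ} (h1 : 1 < z.re) (h2 : z.re < 2) {t : ℝ}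
    (ht : t ∈ Set.Icc (1/2:ℝ) (3/2)) :
    ‖(t:ℂ)^(z-2) - 1‖ ≤ (4*‖z-2‖) * |t - 1| := by
  have hz2 : z - 2 ≠ 0 := by
    intro h
    have := congrArg Complex.re h
    simp [Complex.sub_re] at this
    linarith
  have hder : ∀ x ∈ Set.Icc (1/2:ℝ) (3/2),
      HasDerivWithinAt (fun y : ℝ => (y:ℂ)^(z-2)) ((z-2) * (x:ℂ)^(z-3))
        (Set.Icc (1/2:ℝ) (3/2)) x := by
    intro x hx
    have hx0 : x ≠ 0 := by
      intro h; rw [h] at hx; have := hx.1; norm_num at this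
    have hr : z - 3 ≠ -1 := by
      intro h
      apply hz2
      linear_combination h
    have h := (hasDerivAt_ofReal_cpow_const' hx0 hr).const_mul (z-2)
    have heq : (fun y : ℝ => (z-2) * ((y:ℂ)^(z-3+1)/(z-3+1)))
        = fun y : ℝ => (y:ℂ)^(z-2) := by
      funext y
      rw [show z-3+1 = z-2 by ring]
      field_simp
    rw [← heq]
    exact h.hasDerivWithinAt
  have hbound : ∀ x ∈ Set.Icc (1/2:ℝ) (3/2), ‖(z-2) * (x:ℂ)^(z-3)‖ ≤ 4*‖z-2‖ := by
    intro x hx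
    have hx0 : (0:ℝ) < x := lt_of_lt_of_le (by norm_num) hx.1
    rw [norm_mul, Complex.norm_cpow_eq_rpow_re_of_pos hx0]
    have hre : (z-3).re = z.re - 3 := by simp
    rw [hre]
    have e1 : x ^ (z.re - 3) ≤ (1/2:ℝ) ^ (z.re - 3) :=
      Real.rpow_le_rpow_of_nonpos (by norm_num) hx.1 (by linarith)
    have e2 : (1/2:ℝ) ^ (z.re - 3) ≤ 4 := by
      rw [show (1/2:ℝ) = 2⁻¹ by norm_num, Real.inv_rpow (by norm_num),
        ← Real.rpow_neg (by norm_num), neg_sub]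
      calc (2:ℝ) ^ (3 - z.re) ≤ 2 ^ (2:ℝ) :=
            Real.rpow_le_rpow_of_exponent_le (by norm_num) (by linarith)
        _ = 4 := by
            rw [show (2:ℝ) = ((2:ℕ):ℝ) by norm_num, Real.rpow_natCast]; norm_num
    nlinarith [norm_nonneg (z-2), Real.rpow_nonneg hx0.le (z.re - 3)]
  have h1mem : (1:ℝ) ∈ Set.Icc (1/2:ℝ) (3/2) := by norm_num
  have := (convex_Icc (1/2:ℝ) (3/2)).norm_image_sub_le_of_norm_hasDerivWithin_le
    hder hbound h1mem ht
  simpa [Complex.ofReal_one, Complex.one_cpow, Real.norm_eq_abs] using this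

/-- For every `z ∈ ℂ` with `1 < Re z < 2` there is `C > 0`
(depending only on `z`) such that for every `a ∈ [-1, 1)` the function
`t ↦ t^{z-1} (t² - 2at + 1)^{-1/2} / t` is absolutely integrable on `(0, ∞)` and
`|∫₀^∞ t^{z-1} (t² - 2at + 1)^{-1/2} dt/t + log((1-a)/2)| ≤ C`. -/
theorem stmt_4 (z : ℂ) (h1 : 1 < z.re) (h2 : z.re < 2) :
    ∃ C > (0 : ℝ), ∀ a ∈ Set.Ico (-1 : ℝ) 1,
      IntegrableOn
        (fun t : ℝ =>
          (t : ℂ) ^ (z - 1) * (((t ^ 2 - 2 * a * t + 1) ^ (-(1 : ℝ)/2) : ℝ) : ℂ) / (t : ℂ))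
        (Set.Ioi 0) ∧
      ‖(∫ t in Set.Ioi (0 : ℝ),
          (t : ℂ) ^ (z - 1) * (((t ^ 2 - 2 * a * t + 1) ^ (-(1 : ℝ)/2) : ℝ) : ℂ) / (t : ℂ))
          + (Real.log ((1 - a) / 2) : ℂ)‖ ≤ C := by
  have hσ1 : (0:ℝ) < z.re - 1 := by linarith
  have hσ2 : (0:ℝ) < 2 - z.re := by linarith
  set L : ℝ := 4 * ‖z - 2‖ with hLdef
  have hL0 : 0 ≤ L := by positivity
  refine ⟨2/(z.re-1) + 3/(2-z.re) + L + 4, ?_, ?_⟩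
  · have e1 : 0 < 2/(z.re-1) := div_pos (by norm_num) hσ1
    have e2 : 0 ≤ 3/(2-z.re) := div_nonneg (by norm_num) hσ2.le
    linarith
  intro a ha
  obtain ⟨ha1, ha2⟩ := ha
  have hQpos : ∀ t : ℝ, 0 < t → 0 < t^2 - 2*a*t + 1 := fun t ht => qa_pos ⟨ha1, ha2⟩ ht
  set f : ℝ → ℝ := fun t => (t ^ 2 - 2 * a * t + 1) ^ (-(1:ℝ)/2) with hfdef
  set F : ℝ → ℂ := fun t => (t:ℂ)^(z-2) * ((f t : ℝ) : ℂ) with hFdef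
  -- pointwise facts about f
  have hfnn : ∀ t : ℝ, 0 < t → 0 ≤ f t := by
    intro t ht
    exact Real.rpow_nonneg (hQpos t ht).le _
  have hfsqrt : ∀ t : ℝ, 0 < t → f t = (Real.sqrt (t^2 - 2*a*t + 1))⁻¹ := by
    intro t ht
    simp only [hfdef]
    rw [neg_div, Real.rpow_neg (hQpos t ht).le, ← Real.sqrt_eq_rpow]
  have hmul : ∀ t : ℝ, 0 < t → |t - 1| * f t ≤ 1 := by
    intro t ht
    have hQ := hQpos t ht
    have hsp : 0 < Real.sqrt (t^2 - 2*a*t + 1) := Real.sqrt_pos.2 hQ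
    have hge : |t - 1| ≤ Real.sqrt (t^2 - 2*a*t + 1) := by
      rw [← Real.sqrt_sq_eq_abs]
      exact Real.sqrt_le_sqrt (by nlinarith [mul_pos ht (show (0:ℝ) < 1 - a by linarith)])
    rw [hfsqrt t ht]
    calc |t - 1| * (Real.sqrt (t^2 - 2*a*t + 1))⁻¹
        ≤ Real.sqrt (t^2 - 2*a*t + 1) * (Real.sqrt (t^2 - 2*a*t + 1))⁻¹ := by
          gcongr
      _ = 1 := mul_inv_cancel₀ hsp.ne'
  have hf_half : ∀ t ∈ Set.Ioc (0:ℝ) (1/2), f t ≤ 2 := by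
    intro t ht
    have h := hmul t ht.1
    have habs : |t - 1| = 1 - t := by
      rw [abs_of_nonpos (by linarith [ht.2])]; ring
    rw [habs] at h
    nlinarith [hfnn t ht.1, ht.2]
  have hf_inf : ∀ t ∈ Set.Ioi (3/2:ℝ), f t ≤ 3 * t⁻¹ := by
    intro t ht
    have ht' : (3/2:ℝ) < t := ht
    have ht0 : (0:ℝ) < t := by linarith
    have h := hmul t ht0
    have habs : |t - 1| = t - 1 := abs_of_nonneg (by linarith)
    rw [habs] at h
    rw [show (3:ℝ) * t⁻¹ = 3 / t by ring, le_div_iff₀ ht0]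
    nlinarith [hfnn t ht0]
  -- continuity of F on (0, ∞)
  have hcont : ContinuousOn F (Set.Ioi 0) := by
    intro t ht
    have ht0 : (0:ℝ) < t := ht
    have c1 : ContinuousAt (fun y : ℝ => (y:ℂ)^(z-2)) t :=
      Complex.continuousAt_ofReal_cpow_const t _ (Or.inr ht0.ne')
    have c2 : ContinuousAt f t := by
      have hc : ContinuousAt (fun y : ℝ => y^2 - 2*a*y + 1) t := by fun_prop
      exact hc.rpow_const (Or.inl (hQpos t ht0).ne')
    exact (c1.mul (Complex.continuous_ofReal.continuousAt.comp c2)).continuousWithinAt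
  -- norm of F
  have hnormF : ∀ t : ℝ, 0 < t → ‖F t‖ = t ^ (z.re - 2) * f t := by
    intro t ht
    simp only [hFdef]
    rw [norm_mul, Complex.norm_cpow_eq_rpow_re_of_pos ht,
      Complex.norm_real, Real.norm_eq_abs, abs_of_nonneg (hfnn t ht)]
    have : (z-2).re = z.re - 2 := by simp
    rw [this]
  -- integrability on (0, 1/2]
  have hmeasA : AEStronglyMeasurable F (volume.restrict (Set.Ioc (0:ℝ) (1/2))) :=
    (hcont.mono (fun x hx => hx.1)).aestronglyMeasurable measurableSet_Ioc
  have hgA : IntegrableOn (fun t : ℝ => 2 * t ^ (z.re - 2)) (Set.Ioc (0:ℝ) (1/2)) := by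
    have h := intervalIntegral.intervalIntegrable_rpow' (show (-1:ℝ) < z.re - 2 by linarith)
      (a := (0:ℝ)) (b := 1/2)
    exact ((intervalIntegrable_iff_integrableOn_Ioc_of_le (by norm_num)).1 h).const_mul 2
  have hboundA : ∀ t ∈ Set.Ioc (0:ℝ) (1/2), ‖F t‖ ≤ 2 * t ^ (z.re - 2) := by
    intro t ht
    rw [hnormF t ht.1]
    have h := hf_half t ht
    have h0 : 0 ≤ t ^ (z.re-2) := Real.rpow_nonneg ht.1.le _
    nlinarith [hfnn t ht.1]
  have hintA : IntegrableOn F (Set.Ioc (0:ℝ) (1/2)) := by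
    apply Integrable.mono' hgA hmeasA
    exact (ae_restrict_iff' measurableSet_Ioc).2 (ae_of_all _ hboundA)
  -- integrability on (3/2, ∞)
  have hmeasB : AEStronglyMeasurable F (volume.restrict (Set.Ioi (3/2:ℝ))) :=
    (hcont.mono (fun x hx => lt_trans (by norm_num) hx)).aestronglyMeasurable measurableSet_Ioi
  have hgB : IntegrableOn (fun t : ℝ => 3 * t ^ (z.re - 3)) (Set.Ioi (3/2:ℝ)) :=
    (integrableOn_Ioi_rpow_of_lt (by linarith) (by norm_num)).const_mul 3
  have hboundB : ∀ t ∈ Set.Ioi (3/2:ℝ), ‖F t‖ ≤ 3 * t ^ (z.re - 3) := by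
    intro t ht
    have ht0 : (0:ℝ) < t := by have : (3/2:ℝ) < t := ht; linarith
    rw [hnormF t ht0]
    have h := hf_inf t ht
    have hsplit : t ^ (z.re - 3) = t ^ (z.re - 2) * t⁻¹ := by
      rw [show z.re - 3 = (z.re - 2) + (-1) by ring, Real.rpow_add ht0, Real.rpow_neg_one]
    rw [hsplit]
    have h0 : 0 ≤ t ^ (z.re-2) := Real.rpow_nonneg ht0.le _
    calc t ^ (z.re - 2) * f t ≤ t ^ (z.re - 2) * (3 * t⁻¹) := by gcongr
      _ = 3 * (t ^ (z.re - 2) * t⁻¹) := by ring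
  have hintB : IntegrableOn F (Set.Ioi (3/2:ℝ)) := by
    apply Integrable.mono' hgB hmeasB
    exact (ae_restrict_iff' measurableSet_Ioi).2 (ae_of_all _ hboundB)
  -- integrability on (1/2, 3/2]
  have hintM : IntegrableOn F (Set.Ioc (1/2:ℝ) (3/2)) := by
    have hc : ContinuousOn F (Set.Icc (1/2:ℝ) (3/2)) :=
      hcont.mono (fun x hx => lt_of_lt_of_le (by norm_num) hx.1)
    exact hc.integrableOn_Icc.mono_set Set.Ioc_subset_Icc_self
  -- total integrability
  have hunion1 : IntegrableOn F (Set.Ioc (0:ℝ) (3/2)) := by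
    rw [← Set.Ioc_union_Ioc_eq_Ioc (show (0:ℝ) ≤ 1/2 by norm_num)
      (show (1/2:ℝ) ≤ 3/2 by norm_num)]
    exact hintA.union hintM
  have hIntF : IntegrableOn F (Set.Ioi (0:ℝ)) := by
    rw [← Set.Ioc_union_Ioi_eq_Ioi (show (0:ℝ) ≤ 3/2 by norm_num)]
    exact hunion1.union hintB
  -- the statement's integrand equals F on (0, ∞)
  have hEq : Set.EqOn
      (fun t : ℝ => (t : ℂ) ^ (z - 1) * ((f t : ℝ) : ℂ) / (t : ℂ)) F (Set.Ioi 0) := by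
    intro t ht
    have ht0 : (0:ℝ) < t := ht
    have htc : (t:ℂ) ≠ 0 := by exact_mod_cast ht0.ne'
    simp only [hFdef]
    rw [show z - 1 = (z-2) + 1 by ring, Complex.cpow_add _ _ htc, Complex.cpow_one]
    field_simp
  constructor
  · exact hIntF.congr_fun (fun t ht => (hEq ht).symm) measurableSet_Ioi
  -- now the bound
  have hrepl : (∫ t in Set.Ioi (0:ℝ),
      (t : ℂ) ^ (z - 1) * ((f t : ℝ) : ℂ) / (t : ℂ)) = ∫ t in Set.Ioi (0:ℝ), F t :=
    setIntegral_congr_fun measurableSet_Ioi hEq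
  have hsplit2 : (∫ t in Set.Ioi (0:ℝ), F t)
      = (∫ t in Set.Ioc (0:ℝ) (1/2), F t) + (∫ t in Set.Ioc (1/2:ℝ) (3/2), F t)
        + (∫ t in Set.Ioi (3/2:ℝ), F t) := by
    rw [← Set.Ioc_union_Ioi_eq_Ioi (show (0:ℝ) ≤ 3/2 by norm_num),
      setIntegral_union (Set.Ioc_disjoint_Ioi le_rfl) measurableSet_Ioi hunion1 hintB,
      ← Set.Ioc_union_Ioc_eq_Ioc (show (0:ℝ) ≤ 1/2 by norm_num)
        (show (1/2:ℝ) ≤ 3/2 by norm_num),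
      setIntegral_union (Set.Ioc_disjoint_Ioc_of_le le_rfl) measurableSet_Ioc hintA hintM]
  -- bound on piece A
  have hIA : ‖∫ t in Set.Ioc (0:ℝ) (1/2), F t‖ ≤ 2/(z.re - 1) := by
    have hb : ‖∫ t in Set.Ioc (0:ℝ) (1/2), F t‖
        ≤ ∫ t in Set.Ioc (0:ℝ) (1/2), 2 * t ^ (z.re - 2) :=
      norm_integral_le_of_norm_le hgA
        ((ae_restrict_iff' measurableSet_Ioc).2 (ae_of_all _ hboundA))
    refine hb.trans ?_
    rw [← intervalIntegral.integral_of_le (by norm_num : (0:ℝ) ≤ 1/2),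
      intervalIntegral.integral_const_mul, integral_rpow (Or.inl (by linarith))]
    rw [Real.zero_rpow (show z.re - 2 + 1 ≠ 0 by intro h; rw [← h] at hσ1; linarith), sub_zero]
    have hle1 : ((1:ℝ)/2) ^ (z.re - 2 + 1) ≤ 1 :=
      Real.rpow_le_one (by norm_num) (by norm_num) (by linarith)
    rw [show z.re - 2 + 1 = z.re - 1 by ring] at *
    calc 2 * ((1/2:ℝ) ^ (z.re - 1) / (z.re - 1)) ≤ 2 * (1 / (z.re - 1)) := by
          gcongr
      _ = 2 / (z.re - 1) := by ring
  -- bound on piece B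
  have hIB : ‖∫ t in Set.Ioi (3/2:ℝ), F t‖ ≤ 3/(2 - z.re) := by
    have hb : ‖∫ t in Set.Ioi (3/2:ℝ), F t‖
        ≤ ∫ t in Set.Ioi (3/2:ℝ), 3 * t ^ (z.re - 3) :=
      norm_integral_le_of_norm_le hgB
        ((ae_restrict_iff' measurableSet_Ioi).2 (ae_of_all _ hboundB))
    refine hb.trans ?_
    rw [integral_const_mul, integral_Ioi_rpow_of_lt (by linarith) (by norm_num)]
    have h24 : z.re - 2 ≠ 0 := by intro h; rw [sub_eq_zero] at h; rw [h] at h2; exact lt_irrefl _ h2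
    have heq : -((3/2:ℝ) ^ (z.re - 3 + 1)) / (z.re - 3 + 1)
        = (3/2:ℝ) ^ (z.re - 2) / (2 - z.re) := by
      rw [show z.re - 3 + 1 = z.re - 2 by ring, div_eq_div_iff h24 hσ2.ne']
      ring
    rw [heq]
    have hle1 : ((3:ℝ)/2) ^ (z.re - 2) ≤ 1 :=
      Real.rpow_le_one_of_one_le_of_nonpos (by norm_num) (by linarith)
    calc 3 * ((3/2:ℝ) ^ (z.re - 2) / (2 - z.re)) ≤ 3 * (1 / (2 - z.re)) := by gcongr
      _ = 3 / (2 - z.re) := by ring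
  -- middle piece
  have hintMI : IntervalIntegrable F volume (1/2) (3/2) :=
    (intervalIntegrable_iff_integrableOn_Ioc_of_le (by norm_num)).2 hintM
  have hintfI : IntervalIntegrable (fun t : ℝ => ((f t : ℝ) : ℂ)) volume (1/2) (3/2) := by
    apply ContinuousOn.intervalIntegrable
    rw [Set.uIcc_of_le (by norm_num)]
    intro t ht
    have ht0 : (0:ℝ) < t := lt_of_lt_of_le (by norm_num) ht.1
    have hc : ContinuousAt (fun y : ℝ => y^2 - 2*a*y + 1) t := by fun_prop
    have c2 : ContinuousAt f t := hc.rpow_const (Or.inl (hQpos t ht0).ne')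
    exact (Complex.continuous_ofReal.continuousAt.comp c2).continuousWithinAt
  have hdiffbound : ‖∫ t in (1/2:ℝ)..(3/2), (F t - ((f t : ℝ) : ℂ))‖ ≤ L := by
    have hb := intervalIntegral.norm_integral_le_of_norm_le_const
      (C := L) (f := fun t : ℝ => F t - ((f t : ℝ) : ℂ)) (a := (1/2:ℝ)) (b := (3/2:ℝ)) ?_
    · calc ‖∫ t in (1/2:ℝ)..(3/2), (F t - ((f t : ℝ) : ℂ))‖ ≤ L * |3/2 - 1/2| := hb
        _ = L := by norm_num
    intro x hx
    rw [Set.uIoc_of_le (by norm_num)] at hx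
    show ‖F x - ((f x : ℝ) : ℂ)‖ ≤ L
    have hx0 : (0:ℝ) < x := lt_of_lt_of_le (by norm_num) hx.1.le
    have hrw : F x - ((f x : ℝ) : ℂ) = ((x:ℂ)^(z-2) - 1) * ((f x : ℝ) : ℂ) := by
      simp only [hFdef]; ring
    rw [hrw, norm_mul, Complex.norm_real, Real.norm_eq_abs, abs_of_nonneg (hfnn x hx0)]
    calc ‖(x:ℂ)^(z-2) - 1‖ * f x ≤ ((4*‖z-2‖) * |x - 1|) * f x :=
          mul_le_mul_of_nonneg_right (cpow_lip h1 h2 ⟨hx.1.le, hx.2⟩) (hfnn x hx0)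
      _ = (4*‖z-2‖) * (|x - 1| * f x) := by ring
      _ ≤ (4*‖z-2‖) * 1 := mul_le_mul_of_nonneg_left (hmul x hx0) (by positivity)
      _ = L := by rw [hLdef]; ring
  have hmidval : (∫ t in Set.Ioc (1/2:ℝ) (3/2), F t)
      = (∫ t in (1/2:ℝ)..(3/2), (F t - ((f t : ℝ) : ℂ)))
        + ((Real.log (3/2 - a + Real.sqrt (13/4 - 3*a))
            - Real.log (1/2 - a + Real.sqrt (5/4 - a)) : ℝ) : ℂ) := by
    rw [← intervalIntegral.integral_of_le (by norm_num : (1/2:ℝ) ≤ 3/2)]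
    have hsub := intervalIntegral.integral_sub hintMI hintfI
    have hofreal : (∫ t in (1/2:ℝ)..(3/2), ((f t : ℝ) : ℂ))
        = ((∫ t in (1/2:ℝ)..(3/2), f t : ℝ) : ℂ) := intervalIntegral.integral_ofReal
    have hftc : (∫ t in (1/2:ℝ)..(3/2), f t)
        = Real.log (3/2 - a + Real.sqrt (13/4 - 3*a))
          - Real.log (1/2 - a + Real.sqrt (5/4 - a)) := by
      simp only [hfdef]
      exact ftc_mid ⟨ha1, ha2⟩
    rw [hsub, hofreal, hftc]
    ring
  -- final assembly
  rw [hrepl, hsplit2, hmidval]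
  have hmid := mid_log_bound (a := a) ⟨ha1, ha2⟩
  set D := ∫ t in (1/2:ℝ)..(3/2), (F t - ((f t : ℝ) : ℂ)) with hD
  set M : ℝ := Real.log (3/2 - a + Real.sqrt (13/4 - 3*a))
      - Real.log (1/2 - a + Real.sqrt (5/4 - a)) with hM
  set A := ∫ t in Set.Ioc (0:ℝ) (1/2), F t with hA
  set B := ∫ t in Set.Ioi (3/2:ℝ), F t with hB
  have hre : A + (D + (M:ℂ)) + B + ((Real.log ((1-a)/2) : ℝ) : ℂ)
      = A + B + D + (((M + Real.log ((1-a)/2)) : ℝ) : ℂ) := by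
    push_cast
    ring
  rw [hre]
  calc ‖A + B + D + (((M + Real.log ((1-a)/2)) : ℝ) : ℂ)‖
      ≤ ‖A + B + D‖ + ‖(((M + Real.log ((1-a)/2)) : ℝ) : ℂ)‖ := norm_add_le _ _
    _ ≤ (‖A + B‖ + ‖D‖) + ‖(((M + Real.log ((1-a)/2)) : ℝ) : ℂ)‖ := by
        gcongr
        exact norm_add_le _ _
    _ ≤ ((‖A‖ + ‖B‖) + ‖D‖) + ‖(((M + Real.log ((1-a)/2)) : ℝ) : ℂ)‖ := by
        gcongr
        exact norm_add_le _ _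
    _ ≤ ((2/(z.re-1) + 3/(2-z.re)) + L) + 4 := by
        have hnr : ‖(((M + Real.log ((1-a)/2)) : ℝ) : ℂ)‖ = |M + Real.log ((1-a)/2)| := by
          rw [Complex.norm_real, Real.norm_eq_abs]
        rw [hnr]
        gcongr
    _ = 2/(z.re-1) + 3/(2-z.re) + L + 4 := by ring
end

section
/- For every β ∈ (0, 2π), every x ∈ (0, 1), and every ξ ∈ ℝ, one has |sin((π − β)(x + iξ)) / sin(π(x + iξ))| ≤ |sin((π − β)x) / sin(πx)|. (Consequently the maximum modulus along the vertical line {Re w = x} of the function w ↦ (1/2) sin((π−β)w)/sin(πw), which parametrizes the curve Σ_{α,β} for x = (1−α)/2, is attained at the real point w = x.) -/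
open Real

lemma aux_sinh_nn {t : ℝ} (h : 0 ≤ t) : 0 ≤ Real.sinh t := by
  simpa using Real.sinh_le_sinh.2 h

lemma aux_convexOn_sinh : ConvexOn ℝ (Set.Ici (0:ℝ)) Real.sinh := by
  have hd : deriv Real.sinh = Real.cosh := by
    ext t; exact Real.deriv_sinh ▸ rfl
  refine convexOn_of_deriv2_nonneg' (convex_Ici 0)
    Real.differentiable_sinh.differentiableOn ?_ ?_
  · rw [hd]; exact Real.differentiable_cosh.differentiableOn
  · intro t ht
    have : deriv^[2] Real.sinh t = Real.sinh t := by
      simp [Function.iterate_succ, hd, Real.deriv_cosh]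
    rw [this]
    exact aux_sinh_nn ht

/-- `v * sinh u ≤ u * sinh v` for `0 ≤ u ≤ v`. -/
lemma aux_sinh_mul (u v : ℝ) (hu : 0 ≤ u) (huv : u ≤ v) :
    v * Real.sinh u ≤ u * Real.sinh v := by
  rcases eq_or_lt_of_le (hu.trans huv) with hv | hv
  · have hu0 : u = 0 := le_antisymm (huv.trans hv.symm.le) hu
    simp [hu0, ← hv]
  · have hb : 0 ≤ u / v := div_nonneg hu hv.le
    have hb1 : u / v ≤ 1 := div_le_one_of_le₀ huv hv.le
    have key := aux_convexOn_sinh.2 (Set.self_mem_Ici)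
      (Set.mem_Ici.2 (hu.trans huv)) (by linarith : (0:ℝ) ≤ 1 - u / v) hb
      (by ring)
    simp only [smul_eq_mul, mul_zero, Real.sinh_zero, zero_add] at key
    rw [div_mul_cancel₀ u hv.ne'] at key
    have := mul_le_mul_of_nonneg_left key hv.le
    calc v * Real.sinh u ≤ v * (u / v * Real.sinh v) := this
      _ = u * Real.sinh v := by field_simp

/-- `s * sin (π x) ≤ π * sin (s x)` for `0 ≤ s ≤ π`, `0 ≤ x ≤ 1`. -/
lemma aux_sin_mul (s x : ℝ) (hs : 0 ≤ s) (hsπ : s ≤ π) (hx0 : 0 ≤ x) (hx1 : x ≤ 1) :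
    s * Real.sin (π * x) ≤ π * Real.sin (s * x) := by
  have hπ := Real.pi_pos
  have hπx : π * x ∈ Set.Icc (0:ℝ) π := by
    constructor
    · positivity
    · nlinarith
  have hb : 0 ≤ s / π := by positivity
  have h1s : (0:ℝ) ≤ 1 - s / π := by
    rw [sub_nonneg]; exact div_le_one_of_le₀ hsπ hπ.le
  have key := (strictConcaveOn_sin_Icc.concaveOn).2 (Set.mem_Icc.2 ⟨le_rfl, hπ.le⟩)
    hπx h1s hb (by ring)
  simp only [smul_eq_mul, mul_zero, Real.sin_zero, zero_add] at key
  have harg : s / π * (π * x) = s * x := by field_simp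
  rw [harg] at key
  have := mul_le_mul_of_nonneg_left key hπ.le
  calc s * Real.sin (π * x)
      = π * (s / π * Real.sin (π * x)) := by field_simp
    _ ≤ π * Real.sin (s * x) := this

lemma aux_normSq_sin (a b : ℝ) :
    Complex.normSq (Complex.sin ((a : ℂ) + (b : ℂ) * Complex.I))
      = Real.sin a ^ 2 + Real.sinh b ^ 2 := by
  rw [Complex.sin_add_mul_I]
  simp only [← Complex.ofReal_sin, ← Complex.ofReal_cos, ← Complex.ofReal_sinh,
    ← Complex.ofReal_cosh, ← Complex.ofReal_mul]
  rw [Complex.normSq_add_mul_I]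
  have h1 := Real.sin_sq_add_cos_sq a
  have h2 := Real.cosh_sq b
  nlinarith

/-- For every `β ∈ (0, 2π)`, `x ∈ (0, 1)` and `ξ ∈ ℝ`,
`|sin((π-β)(x+iξ)) / sin(π(x+iξ))| ≤ |sin((π-β)x) / sin(πx)|`: the maximal modulus
along the vertical line `Re w = x` is attained at the real point `w = x`. -/
theorem stmt_6 (β x : ℝ) (hβ : β ∈ Set.Ioo 0 (2 * π)) (hx : x ∈ Set.Ioo (0 : ℝ) 1)
    (ξ : ℝ) :
    ‖Complex.sin (((π : ℂ) - (β : ℂ)) * ((x : ℂ) + (ξ : ℂ) * Complex.I)) /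
        Complex.sin ((π : ℂ) * ((x : ℂ) + (ξ : ℂ) * Complex.I))‖
      ≤ |Real.sin ((π - β) * x) / Real.sin (π * x)| := by
  obtain ⟨hβ0, hβ2⟩ := hβ
  obtain ⟨hx0, hx1⟩ := hx
  have hπ := Real.pi_pos
  set a : ℝ := π - β with ha
  -- rewrite complex arguments
  have e1 : ((π : ℂ) - (β : ℂ)) * ((x : ℂ) + (ξ : ℂ) * Complex.I)
      = ((a * x : ℝ) : ℂ) + ((a * ξ : ℝ) : ℂ) * Complex.I := by
    push_cast [ha]; ring
  have e2 : ((π : ℂ)) * ((x : ℂ) + (ξ : ℂ) * Complex.I)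
      = ((π * x : ℝ) : ℂ) + ((π * ξ : ℝ) : ℂ) * Complex.I := by
    push_cast; ring
  rw [e1, e2]
  -- compute norms
  have hnorm : ∀ u v : ℝ, ‖Complex.sin ((u : ℂ) + (v : ℂ) * Complex.I)‖
      = Real.sqrt (Real.sin u ^ 2 + Real.sinh v ^ 2) := by
    intro u v
    rw [Complex.norm_def, aux_normSq_sin u v]
  have hsinπx : 0 < Real.sin (π * x) := by
    apply Real.sin_pos_of_pos_of_lt_pi
    · positivity
    · nlinarith
  -- key inequality on squares
  have key : Real.sin (π * x) ^ 2 * Real.sinh (a * ξ) ^ 2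
      ≤ Real.sin (a * x) ^ 2 * Real.sinh (π * ξ) ^ 2 := by
    set s := |a| with hs
    have hs0 : 0 ≤ s := abs_nonneg a
    have hsπ : s ≤ π := by
      rw [hs, abs_le]; constructor <;> [linarith; linarith]
    have hsinsq : Real.sin (a * x) ^ 2 = Real.sin (s * x) ^ 2 := by
      rcases abs_cases a with ⟨h, _⟩ | ⟨h, _⟩
      · rw [hs, h]
      · rw [hs, h, neg_mul, Real.sin_neg]; ring
    have hsinhsq : Real.sinh (a * ξ) ^ 2 = Real.sinh (s * |ξ|) ^ 2 := by
      have : s * |ξ| = |a * ξ| := (abs_mul a ξ).symm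
      rw [this]
      rcases abs_cases (a * ξ) with ⟨h, _⟩ | ⟨h, _⟩
      · rw [h]
      · rw [h, Real.sinh_neg]; ring
    have hsinhπ : Real.sinh (π * ξ) ^ 2 = Real.sinh (π * |ξ|) ^ 2 := by
      have : π * |ξ| = |π * ξ| := by rw [abs_mul, abs_of_pos hπ]
      rw [this]
      rcases abs_cases (π * ξ) with ⟨h, _⟩ | ⟨h, _⟩
      · rw [h]
      · rw [h, Real.sinh_neg]; ring
    rw [hsinsq, hsinhsq, hsinhπ]
    set ζ := |ξ| with hζ
    have hζ0 : 0 ≤ ζ := abs_nonneg ξ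
    -- π ζ sinh(s ζ) ≤ s ζ sinh(π ζ)
    have h1 : (π * ζ) * Real.sinh (s * ζ) ≤ (s * ζ) * Real.sinh (π * ζ) := by
      have := aux_sinh_mul (s * ζ) (π * ζ) (by positivity)
        (by nlinarith)
      linarith [this]
    have h2 : s * Real.sin (π * x) ≤ π * Real.sin (s * x) :=
      aux_sin_mul s x hs0 hsπ hx0.le hx1.le
    have hsin_s_nonneg : 0 ≤ Real.sin (s * x) := by
      apply Real.sin_nonneg_of_nonneg_of_le_pi
      · positivity
      · nlinarith
    have hsinh_s_nonneg : 0 ≤ Real.sinh (s * ζ) := aux_sinh_nn (by positivity)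
    have hsinh_π_nonneg : 0 ≤ Real.sinh (π * ζ) := aux_sinh_nn (by positivity)
    -- from h1 (ζ factor) and h2, deduce squared inequality
    rcases eq_or_lt_of_le hζ0 with hζe | hζp
    · rw [← hζe]; simp
    rcases eq_or_lt_of_le hs0 with hse | hsp
    · rw [← hse]; simp
    have h1' : π * Real.sinh (s * ζ) ≤ s * Real.sinh (π * ζ) := by
      have := h1
      nlinarith
    have hmul : (π * Real.sinh (s * ζ)) * (s * Real.sin (π * x))
        ≤ (s * Real.sinh (π * ζ)) * (π * Real.sin (s * x)) := by
      apply mul_le_mul h1' h2 (by positivity) (by positivity)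
    have : Real.sinh (s * ζ) * Real.sin (π * x) ≤ Real.sinh (π * ζ) * Real.sin (s * x) := by
      nlinarith
    nlinarith [this, mul_nonneg hsinh_s_nonneg hsinπx.le]
  -- assemble
  rw [norm_div, hnorm, hnorm, abs_div, div_le_div_iff₀ (by positivity)
    (by positivity : (0:ℝ) < |Real.sin (π * x)|)]
  rw [← Real.sqrt_sq_eq_abs, ← Real.sqrt_sq_eq_abs, ← Real.sqrt_mul (by positivity),
    ← Real.sqrt_mul (by positivity)]
  apply Real.sqrt_le_sqrt
  nlinarith [key, sq_nonneg (Real.sinh (a*ξ)), sq_nonneg (Real.sinh (π*ξ)), sq_nonneg (Real.sin (a*x))]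
end

section
/- There exists a constant C > 0 such that for every c ∈ [−1, 1) the function t ↦ t^{3/2} |log t| (t² − 2ct + 1)^{−3/2} · t^{−1} is integrable on (0, ∞) and ∫₀^∞ t^{3/2} |log t| (t² − 2ct + 1)^{−3/2} dt/t ≤ C (1 − c)^{−1/2}. -/
open MeasureTheory Real Set

lemma stmt7_xpos {c t : ℝ} (hc : c < 1) (ht : 0 < t) : 0 < t ^ 2 - 2 * c * t + 1 := by
  nlinarith [sq_nonneg (t - 1), mul_pos ht (sub_pos.2 hc)]

lemma stmt7_cont {c : ℝ} (hc : c < 1) :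
    ContinuousOn (fun t : ℝ =>
      t ^ ((3 : ℝ)/2) * |Real.log t| * (t ^ 2 - 2 * c * t + 1) ^ (-(3 : ℝ)/2) / t)
      (Ioi 0) := by
  apply ContinuousOn.div _ continuousOn_id (fun t ht => ne_of_gt ht)
  apply ContinuousOn.mul
  · apply ContinuousOn.mul
    · exact continuousOn_id.rpow_const (fun t ht => Or.inl (ne_of_gt ht))
    · exact (Real.continuousOn_log.mono (fun t ht => by simpa using (ne_of_gt ht))).abs
  · apply ContinuousOn.rpow_const
    · fun_prop
    · exact fun t ht => Or.inl (stmt7_xpos hc ht).ne'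

lemma stmt7_nonneg {c t : ℝ} (hc : c < 1) (ht : 0 < t) :
    0 ≤ t ^ ((3 : ℝ)/2) * |Real.log t| * (t ^ 2 - 2 * c * t + 1) ^ (-(3 : ℝ)/2) / t := by
  apply div_nonneg _ ht.le
  exact mul_nonneg (mul_nonneg (Real.rpow_nonneg ht.le _) (abs_nonneg _))
    (Real.rpow_nonneg (stmt7_xpos hc ht).le _)

lemma stmt7_eq {c t : ℝ} (ht : 0 < t) :
    t ^ ((3 : ℝ)/2) * |Real.log t| * (t ^ 2 - 2 * c * t + 1) ^ (-(3 : ℝ)/2) / t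
      = t ^ ((1 : ℝ)/2) * (|Real.log t| * (t ^ 2 - 2 * c * t + 1) ^ (-(3 : ℝ)/2)) := by
  rw [show (1 : ℝ)/2 = 3/2 - 1 by norm_num, Real.rpow_sub ht, Real.rpow_one]
  ring

lemma stmt7_bound1 {c t : ℝ} (hc : c < 1) (ht : 0 < t) (ht2 : t ≤ 1/2) :
    t ^ ((3 : ℝ)/2) * |Real.log t| * (t ^ 2 - 2 * c * t + 1) ^ (-(3 : ℝ)/2) / t ≤ 32 := by
  have hx := stmt7_xpos hc ht
  rw [stmt7_eq ht]
  have hxq : (1/4 : ℝ) ≤ t ^ 2 - 2 * c * t + 1 := by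
    nlinarith [mul_nonneg ht.le (sub_nonneg.2 hc.le)]
  have hxp : (t ^ 2 - 2 * c * t + 1) ^ (-(3 : ℝ)/2) ≤ 8 := by
    have h := Real.rpow_le_rpow_of_nonpos (by norm_num : (0:ℝ) < 1/4) hxq
      (by norm_num : -(3 : ℝ)/2 ≤ 0)
    refine h.trans_eq ?_
    rw [show (1/4 : ℝ) = (2:ℝ) ^ (-2 : ℝ) by
          rw [show (-2 : ℝ) = ((-2 : ℤ) : ℝ) by norm_num, Real.rpow_intCast]; norm_num,
        ← Real.rpow_mul (by norm_num : (0:ℝ) ≤ 2)]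
    rw [show (-2 : ℝ) * (-(3 : ℝ)/2) = ((3 : ℤ) : ℝ) by norm_num, Real.rpow_intCast]
    norm_num
  have hlog : |Real.log t| ≤ 4 * t ^ (-(1 : ℝ)/4) := by
    rw [abs_of_nonpos (Real.log_nonpos ht.le (by linarith))]
    have h := Real.log_le_rpow_div (x := t⁻¹) (by positivity) (by norm_num : (0:ℝ) < 1/4)
    rw [Real.log_inv] at h
    have h2 : (t⁻¹) ^ ((1:ℝ)/4) = t ^ (-(1 : ℝ)/4) := by
      rw [show -(1 : ℝ)/4 = -((1:ℝ)/4) by ring, Real.rpow_neg ht.le, ← Real.inv_rpow ht.le]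
    calc -Real.log t ≤ (t⁻¹) ^ ((1:ℝ)/4) / (1/4) := by linarith
    _ = 4 * t ^ (-(1 : ℝ)/4) := by rw [h2]; ring
  calc t ^ ((1:ℝ)/2) * (|Real.log t| * (t ^ 2 - 2 * c * t + 1) ^ (-(3 : ℝ)/2))
      ≤ t ^ ((1:ℝ)/2) * ((4 * t ^ (-(1 : ℝ)/4)) * 8) := by
        apply mul_le_mul_of_nonneg_left _ (Real.rpow_nonneg ht.le _)
        exact mul_le_mul hlog hxp (Real.rpow_nonneg hx.le _) (by positivity)
  _ = 32 * t ^ ((1:ℝ)/4) := by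
        rw [show t ^ ((1:ℝ)/2) * ((4 * t ^ (-(1 : ℝ)/4)) * 8)
              = 32 * (t ^ ((1:ℝ)/2) * t ^ (-(1 : ℝ)/4)) by ring, ← Real.rpow_add ht]
        norm_num
  _ ≤ 32 * 1 := by
        apply mul_le_mul_of_nonneg_left _ (by norm_num : (0:ℝ) ≤ 32)
        exact Real.rpow_le_one ht.le (by linarith) (by norm_num)
  _ = 32 := by norm_num

lemma stmt7_bound4 {c t : ℝ} (hc : c < 1) (ht2 : 2 < t) :
    t ^ ((3 : ℝ)/2) * |Real.log t| * (t ^ 2 - 2 * c * t + 1) ^ (-(3 : ℝ)/2) / t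
      ≤ 16 * t ^ (-(2 : ℝ)) := by
  have ht : 0 < t := by linarith
  have hx := stmt7_xpos hc ht
  rw [stmt7_eq ht]
  have hxq : t ^ 2 / 4 ≤ t ^ 2 - 2 * c * t + 1 := by
    nlinarith [mul_nonneg ht.le (sub_nonneg.2 hc.le),
      mul_nonneg (by linarith : (0:ℝ) ≤ t - 2) (by linarith : (0:ℝ) ≤ 3 * t - 2)]
  have hxp : (t ^ 2 - 2 * c * t + 1) ^ (-(3 : ℝ)/2) ≤ 8 * t ^ (-(3 : ℝ)) := by
    have h := Real.rpow_le_rpow_of_nonpos (by positivity : (0:ℝ) < t ^ 2 / 4) hxq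
      (by norm_num : -(3 : ℝ)/2 ≤ 0)
    refine h.trans_eq ?_
    rw [Real.div_rpow (by positivity) (by norm_num : (0:ℝ) ≤ 4)]
    rw [← Real.rpow_natCast t 2, ← Real.rpow_mul ht.le,
        show ((2:ℕ):ℝ) * (-(3 : ℝ)/2) = -(3:ℝ) by norm_num]
    rw [show (4:ℝ) = (2:ℝ) ^ ((2:ℕ):ℝ) by rw [Real.rpow_natCast]; norm_num,
        ← Real.rpow_mul (by norm_num : (0:ℝ) ≤ 2),
        show ((2:ℕ):ℝ) * (-(3 : ℝ)/2) = ((-3 : ℤ):ℝ) by norm_num, Real.rpow_intCast]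
    norm_num
    ring
  have hlog : |Real.log t| ≤ 2 * t ^ ((1 : ℝ)/2) := by
    rw [abs_of_nonneg (Real.log_nonneg (by linarith))]
    have h := Real.log_le_rpow_div (x := t) ht.le (by norm_num : (0:ℝ) < 1/2)
    calc Real.log t ≤ t ^ ((1:ℝ)/2) / (1/2) := h
    _ = 2 * t ^ ((1:ℝ)/2) := by ring
  calc t ^ ((1:ℝ)/2) * (|Real.log t| * (t ^ 2 - 2 * c * t + 1) ^ (-(3 : ℝ)/2))
      ≤ t ^ ((1:ℝ)/2) * ((2 * t ^ ((1 : ℝ)/2)) * (8 * t ^ (-(3 : ℝ)))) := by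
        apply mul_le_mul_of_nonneg_left _ (Real.rpow_nonneg ht.le _)
        exact mul_le_mul hlog hxp (Real.rpow_nonneg hx.le _) (by positivity)
  _ = 16 * (t ^ ((1:ℝ)/2) * t ^ ((1:ℝ)/2) * t ^ (-(3 : ℝ))) := by ring
  _ = 16 * t ^ (-(2 : ℝ)) := by
        rw [← Real.rpow_add ht, ← Real.rpow_add ht]
        norm_num

lemma stmt7_xge' {c t : ℝ} (hc : c < 1) (ht : 1/2 < t) :
    (t - 1) ^ 2 + (1 - c) ≤ t ^ 2 - 2 * c * t + 1 := by
  nlinarith [mul_nonneg (by linarith : (0:ℝ) ≤ 2 * t - 1) (by linarith : (0:ℝ) ≤ 1 - c)]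

lemma stmt7_sqrt_le {t : ℝ} (ht2 : t ≤ 2) : t ^ ((1:ℝ)/2) ≤ 3/2 := by
  rw [← Real.sqrt_eq_rpow]
  calc Real.sqrt t ≤ Real.sqrt (9/4) := Real.sqrt_le_sqrt (by linarith)
  _ = 3/2 := by rw [show (9/4 : ℝ) = (3/2)^2 by norm_num, Real.sqrt_sq (by norm_num : (0:ℝ) ≤ 3/2)]

lemma stmt7_bound2 {c t : ℝ} (hc : c < 1) (ht : 1/2 < t) (ht2 : t ≤ 1) :
    t ^ ((3 : ℝ)/2) * |Real.log t| * (t ^ 2 - 2 * c * t + 1) ^ (-(3 : ℝ)/2) / t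
      ≤ 3 * ((1 - t) * ((t - 1) ^ 2 + (1 - c)) ^ (-(3 : ℝ)/2)) := by
  have htp : (0:ℝ) < t := by linarith
  have hx := stmt7_xpos hc htp
  have hb : (0:ℝ) < (t - 1) ^ 2 + (1 - c) := by nlinarith [sq_nonneg (t-1)]
  rw [stmt7_eq htp]
  have h1 : t ^ ((1:ℝ)/2) ≤ 1 := Real.rpow_le_one htp.le ht2 (by norm_num)
  have hlog : |Real.log t| ≤ 2 * (1 - t) := by
    rw [abs_of_nonpos (Real.log_nonpos htp.le ht2)]
    have h := Real.log_le_sub_one_of_pos (inv_pos.2 htp)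
    rw [Real.log_inv] at h
    have h2 : t⁻¹ - 1 = (1 - t)/t := by field_simp
    rw [h2] at h
    have h3 : (1 - t)/t ≤ 2 * (1 - t) := by
      rw [div_le_iff₀ htp]
      nlinarith [mul_nonneg (by linarith : (0:ℝ) ≤ 1 - t) (by linarith : (0:ℝ) ≤ 2 * t - 1)]
    linarith
  have hxp : (t ^ 2 - 2 * c * t + 1) ^ (-(3 : ℝ)/2) ≤ ((t - 1) ^ 2 + (1 - c)) ^ (-(3 : ℝ)/2) :=
    Real.rpow_le_rpow_of_nonpos hb (stmt7_xge' hc ht) (by norm_num)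
  calc t ^ ((1:ℝ)/2) * (|Real.log t| * (t ^ 2 - 2 * c * t + 1) ^ (-(3 : ℝ)/2))
      ≤ 1 * ((2 * (1 - t)) * ((t - 1) ^ 2 + (1 - c)) ^ (-(3 : ℝ)/2)) := by
        apply mul_le_mul h1 _ _ (by norm_num)
        · exact mul_le_mul hlog hxp (Real.rpow_nonneg hx.le _) (by linarith)
        · exact mul_nonneg (abs_nonneg _) (Real.rpow_nonneg hx.le _)
  _ ≤ 3 * ((1 - t) * ((t - 1) ^ 2 + (1 - c)) ^ (-(3 : ℝ)/2)) := by
        have := Real.rpow_nonneg hb.le (-(3 : ℝ)/2)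
        nlinarith [mul_nonneg (by linarith : (0:ℝ) ≤ 1 - t) this]

lemma stmt7_bound3 {c t : ℝ} (hc : c < 1) (ht : 1 < t) (ht2 : t ≤ 2) :
    t ^ ((3 : ℝ)/2) * |Real.log t| * (t ^ 2 - 2 * c * t + 1) ^ (-(3 : ℝ)/2) / t
      ≤ 3 * ((t - 1) * ((t - 1) ^ 2 + (1 - c)) ^ (-(3 : ℝ)/2)) := by
  have htp : (0:ℝ) < t := by linarith
  have hx := stmt7_xpos hc htp
  have hb : (0:ℝ) < (t - 1) ^ 2 + (1 - c) := by nlinarith [sq_nonneg (t-1)]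
  rw [stmt7_eq htp]
  have h1 : t ^ ((1:ℝ)/2) ≤ 3/2 := stmt7_sqrt_le ht2
  have hlog : |Real.log t| ≤ 2 * (t - 1) := by
    rw [abs_of_nonneg (Real.log_nonneg ht.le)]
    have h := Real.log_le_sub_one_of_pos htp
    linarith
  have hxp : (t ^ 2 - 2 * c * t + 1) ^ (-(3 : ℝ)/2) ≤ ((t - 1) ^ 2 + (1 - c)) ^ (-(3 : ℝ)/2) :=
    Real.rpow_le_rpow_of_nonpos hb (stmt7_xge' hc (by linarith)) (by norm_num)
  calc t ^ ((1:ℝ)/2) * (|Real.log t| * (t ^ 2 - 2 * c * t + 1) ^ (-(3 : ℝ)/2))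
      ≤ (3/2) * ((2 * (t - 1)) * ((t - 1) ^ 2 + (1 - c)) ^ (-(3 : ℝ)/2)) := by
        apply mul_le_mul h1 _ _ (by norm_num)
        · exact mul_le_mul hlog hxp (Real.rpow_nonneg hx.le _) (by linarith)
        · exact mul_nonneg (abs_nonneg _) (Real.rpow_nonneg hx.le _)
  _ = 3 * ((t - 1) * ((t - 1) ^ 2 + (1 - c)) ^ (-(3 : ℝ)/2)) := by ring

lemma stmt7_hasDerivG {a : ℝ} (ha : 0 < a) (t : ℝ) :
    HasDerivAt (fun t : ℝ => ((t - 1) ^ 2 + a) ^ (-(1 : ℝ)/2))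
      ((1 - t) * ((t - 1) ^ 2 + a) ^ (-(3 : ℝ)/2)) t := by
  have h1 : HasDerivAt (fun t : ℝ => t - 1) 1 t := (hasDerivAt_id t).sub_const 1
  have hu : HasDerivAt (fun t : ℝ => (t - 1) ^ 2 + a) (2 * (t - 1)) t := by
    simpa using (h1.pow 2).add_const a
  have hne : (t - 1) ^ 2 + a ≠ 0 := by positivity
  have h := (Real.hasDerivAt_rpow_const (x := (t - 1) ^ 2 + a) (p := -(1 : ℝ)/2)
    (Or.inl hne)).comp t hu
  refine h.congr_deriv ?_
  rw [show (-(1:ℝ)/2 - 1) = -(3:ℝ)/2 by norm_num]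
  ring

lemma stmt7_contg {a : ℝ} (ha : 0 < a) (r : ℝ) :
    Continuous (fun t : ℝ => (r - t) * ((t - 1) ^ 2 + a) ^ (-(3 : ℝ)/2)) := by
  apply Continuous.mul (by continuity)
  apply Continuous.rpow_const ?_ (fun x => Or.inl (by positivity))
  continuity

lemma stmt7_contg' {a : ℝ} (ha : 0 < a) :
    Continuous (fun t : ℝ => (t - 1) * ((t - 1) ^ 2 + a) ^ (-(3 : ℝ)/2)) := by
  apply Continuous.mul (by continuity)
  apply Continuous.rpow_const ?_ (fun x => Or.inl (by positivity))
  continuity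

lemma stmt7_int2 {a : ℝ} (ha : 0 < a) :
    ∫ t in Ioc (1/2 : ℝ) 1, 3 * ((1 - t) * ((t - 1) ^ 2 + a) ^ (-(3 : ℝ)/2))
      ≤ 3 * a ^ (-(1 : ℝ)/2) := by
  rw [← intervalIntegral.integral_of_le (by norm_num : (1/2:ℝ) ≤ 1),
      intervalIntegral.integral_const_mul]
  have key : ∫ t in (1/2:ℝ)..1, (1 - t) * ((t - 1) ^ 2 + a) ^ (-(3 : ℝ)/2)
      = (((1:ℝ) - 1) ^ 2 + a) ^ (-(1 : ℝ)/2) - (((1/2:ℝ) - 1) ^ 2 + a) ^ (-(1 : ℝ)/2) :=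
    intervalIntegral.integral_eq_sub_of_hasDerivAt
      (fun t _ => stmt7_hasDerivG ha t) ((stmt7_contg ha 1).intervalIntegrable _ _)
  rw [key, show ((1:ℝ) - 1) ^ 2 + a = a by ring]
  have h := Real.rpow_nonneg (by nlinarith [sq_nonneg ((1/2:ℝ)-1)] : (0:ℝ) ≤ ((1/2:ℝ) - 1) ^ 2 + a)
    (-(1 : ℝ)/2)
  nlinarith [h]

lemma stmt7_hasDerivF {a : ℝ} (ha : 0 < a) (t : ℝ) :
    HasDerivAt (fun t : ℝ => -((t - 1) ^ 2 + a) ^ (-(1 : ℝ)/2))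
      ((t - 1) * ((t - 1) ^ 2 + a) ^ (-(3 : ℝ)/2)) t := by
  have h := (stmt7_hasDerivG ha t).neg
  refine h.congr_deriv ?_
  ring

lemma stmt7_int3 {a : ℝ} (ha : 0 < a) :
    ∫ t in Ioc (1 : ℝ) 2, 3 * ((t - 1) * ((t - 1) ^ 2 + a) ^ (-(3 : ℝ)/2))
      ≤ 3 * a ^ (-(1 : ℝ)/2) := by
  rw [← intervalIntegral.integral_of_le (by norm_num : (1:ℝ) ≤ 2),
      intervalIntegral.integral_const_mul]
  have key : ∫ t in (1:ℝ)..2, (t - 1) * ((t - 1) ^ 2 + a) ^ (-(3 : ℝ)/2)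
      = -((((2:ℝ) - 1)) ^ 2 + a) ^ (-(1 : ℝ)/2) - -((((1:ℝ) - 1)) ^ 2 + a) ^ (-(1 : ℝ)/2) :=
    intervalIntegral.integral_eq_sub_of_hasDerivAt
      (fun t _ => stmt7_hasDerivF ha t) ((stmt7_contg' ha).intervalIntegrable _ _)
  rw [key, show ((1:ℝ) - 1) ^ 2 + a = a by ring]
  have h := Real.rpow_nonneg (by nlinarith [sq_nonneg ((2:ℝ)-1)] : (0:ℝ) ≤ ((2:ℝ) - 1) ^ 2 + a)
    (-(1 : ℝ)/2)
  nlinarith [h]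

lemma stmt7_int4 : ∫ t in Ioi (2:ℝ), 16 * t ^ (-(2 : ℝ)) = 8 := by
  rw [integral_const_mul,
      integral_Ioi_rpow_of_lt (by norm_num : (-2:ℝ) < -1) (by norm_num : (0:ℝ) < 2),
      show (-(2:ℝ) + 1) = -1 by norm_num, Real.rpow_neg_one]
  norm_num

/-- There is `C > 0` such that for every `c ∈ [-1, 1)` the function
`t ↦ t^{3/2} |log t| (t² - 2ct + 1)^{-3/2} / t` is integrable on `(0, ∞)` and
`∫₀^∞ t^{3/2} |log t| (t² - 2ct + 1)^{-3/2} dt/t ≤ C (1-c)^{-1/2}`. -/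
theorem stmt_7 :
    ∃ C > (0 : ℝ), ∀ c ∈ Set.Ico (-1 : ℝ) 1,
      IntegrableOn
        (fun t : ℝ =>
          t ^ ((3 : ℝ)/2) * |Real.log t| * (t ^ 2 - 2 * c * t + 1) ^ (-(3 : ℝ)/2) / t)
        (Set.Ioi 0) ∧
      (∫ t in Set.Ioi (0 : ℝ),
          t ^ ((3 : ℝ)/2) * |Real.log t| * (t ^ 2 - 2 * c * t + 1) ^ (-(3 : ℝ)/2) / t)
        ≤ C * (1 - c) ^ (-(1 : ℝ)/2) := by
  refine ⟨100, by norm_num, ?_⟩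
  rintro c ⟨hc1, hc2⟩
  have ha : (0:ℝ) < 1 - c := by linarith
  set f : ℝ → ℝ := fun t =>
    t ^ ((3 : ℝ)/2) * |Real.log t| * (t ^ 2 - 2 * c * t + 1) ^ (-(3 : ℝ)/2) / t with hf
  have hcont := stmt7_cont hc2
  -- integrability on the four pieces
  have hi1 : IntegrableOn f (Ioc (0:ℝ) (1/2)) := by
    refine ⟨(hcont.mono Ioc_subset_Ioi_self).aestronglyMeasurable measurableSet_Ioc, ?_⟩
    apply MeasureTheory.HasFiniteIntegral.restrict_of_bounded (C := 32)
    · rw [Real.volume_Ioc]; exact ENNReal.ofReal_lt_top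
    · filter_upwards [ae_restrict_mem measurableSet_Ioc] with t ht
      rw [Real.norm_eq_abs, abs_of_nonneg (stmt7_nonneg hc2 ht.1)]
      exact stmt7_bound1 hc2 ht.1 ht.2
  have hsub2 : Icc (1/2:ℝ) 1 ⊆ Ioi 0 := fun x hx => Set.mem_Ioi.2 (lt_of_lt_of_le (by norm_num) hx.1)
  have hi2 : IntegrableOn f (Ioc (1/2:ℝ) 1) :=
    ((hcont.mono hsub2).integrableOn_Icc).mono_set Ioc_subset_Icc_self
  have hsub3 : Icc (1:ℝ) 2 ⊆ Ioi 0 := fun x hx => Set.mem_Ioi.2 (lt_of_lt_of_le (by norm_num) hx.1)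
  have hi3 : IntegrableOn f (Ioc (1:ℝ) 2) :=
    ((hcont.mono hsub3).integrableOn_Icc).mono_set Ioc_subset_Icc_self
  have hsub4 : Ioi (2:ℝ) ⊆ Ioi 0 := fun x hx => lt_trans (by norm_num : (0:ℝ) < 2) hx
  have hgi4 : IntegrableOn (fun t : ℝ => 16 * t ^ (-(2:ℝ))) (Ioi 2) :=
    (integrableOn_Ioi_rpow_of_lt (by norm_num : (-2:ℝ) < -1) (by norm_num : (0:ℝ) < 2)).const_mul 16
  have hi4 : IntegrableOn f (Ioi (2:ℝ)) := by
    apply Integrable.mono hgi4 ((hcont.mono hsub4).aestronglyMeasurable measurableSet_Ioi)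
    filter_upwards [ae_restrict_mem measurableSet_Ioi] with t ht
    have ht0 : (0:ℝ) < t := lt_trans (by norm_num) ht
    rw [Real.norm_eq_abs, abs_of_nonneg (stmt7_nonneg hc2 ht0), Real.norm_eq_abs,
        abs_of_nonneg (mul_nonneg (by norm_num) (Real.rpow_nonneg ht0.le _))]
    exact stmt7_bound4 hc2 ht
  have hIoi : Ioi (0:ℝ) = (Ioc 0 (1/2) ∪ Ioc (1/2) 1 ∪ Ioc 1 2) ∪ Ioi 2 := by
    rw [Set.Ioc_union_Ioc_eq_Ioc (by norm_num : (0:ℝ) ≤ 1/2) (by norm_num : (1/2:ℝ) ≤ 1),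
        Set.Ioc_union_Ioc_eq_Ioc (by norm_num : (0:ℝ) ≤ 1) (by norm_num : (1:ℝ) ≤ 2),
        Set.Ioc_union_Ioi_eq_Ioi (by norm_num : (0:ℝ) ≤ 2)]
  have hint : IntegrableOn f (Ioi 0) := by
    rw [hIoi]; exact ((hi1.union hi2).union hi3).union hi4
  refine ⟨hint, ?_⟩
  have hd1 : Disjoint (Ioc (0:ℝ) (1/2)) (Ioc (1/2:ℝ) 1) := by
    rw [Set.disjoint_left]; rintro x ⟨_, h1⟩ ⟨h2, _⟩; linarith
  have hd2 : Disjoint (Ioc (0:ℝ) (1/2) ∪ Ioc (1/2:ℝ) 1) (Ioc (1:ℝ) 2) := by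
    rw [Set.disjoint_left]; rintro x hx ⟨h2, _⟩
    rcases hx with ⟨_, h⟩ | ⟨_, h⟩ <;> linarith
  have hd3 : Disjoint (Ioc (0:ℝ) (1/2) ∪ Ioc (1/2:ℝ) 1 ∪ Ioc (1:ℝ) 2) (Ioi (2:ℝ)) := by
    rw [Set.disjoint_left]; rintro x hx h2
    rw [Set.mem_Ioi] at h2
    rcases hx with (⟨_, h⟩ | ⟨_, h⟩) | ⟨_, h⟩ <;> linarith
  rw [hIoi, setIntegral_union hd3 measurableSet_Ioi ((hi1.union hi2).union hi3) hi4,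
      setIntegral_union hd2 measurableSet_Ioc (hi1.union hi2) hi3,
      setIntegral_union hd1 measurableSet_Ioc hi1 hi2]
  -- bound each piece
  have hb1 : ∫ t in Ioc (0:ℝ) (1/2), f t ≤ 16 := by
    calc ∫ t in Ioc (0:ℝ) (1/2), f t ≤ ∫ _ in Ioc (0:ℝ) (1/2), (32:ℝ) := by
          apply setIntegral_mono_on hi1
            (integrableOn_const (by rw [Real.volume_Ioc]; exact ENNReal.ofReal_ne_top))
            measurableSet_Ioc
          exact fun t ht => stmt7_bound1 hc2 ht.1 ht.2
    _ = 16 := by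
          rw [setIntegral_const, measureReal_def, Real.volume_Ioc, smul_eq_mul]
          rw [show (1/2 : ℝ) - 0 = 1/2 by norm_num, ENNReal.toReal_ofReal (by norm_num)]
          norm_num
  have hb2 : ∫ t in Ioc (1/2:ℝ) 1, f t ≤ 3 * (1 - c) ^ (-(1:ℝ)/2) := by
    have hgc : Continuous (fun t : ℝ => 3 * ((1 - t) * ((t - 1) ^ 2 + (1 - c)) ^ (-(3 : ℝ)/2))) :=
      continuous_const.mul (stmt7_contg ha 1)
    calc ∫ t in Ioc (1/2:ℝ) 1, f t
        ≤ ∫ t in Ioc (1/2:ℝ) 1, 3 * ((1 - t) * ((t - 1) ^ 2 + (1 - c)) ^ (-(3 : ℝ)/2)) := by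
          apply setIntegral_mono_on hi2 (hgc.integrableOn_Ioc) measurableSet_Ioc
          exact fun t ht => stmt7_bound2 hc2 ht.1 ht.2
    _ ≤ 3 * (1 - c) ^ (-(1:ℝ)/2) := stmt7_int2 ha
  have hb3 : ∫ t in Ioc (1:ℝ) 2, f t ≤ 3 * (1 - c) ^ (-(1:ℝ)/2) := by
    have hgc : Continuous (fun t : ℝ => 3 * ((t - 1) * ((t - 1) ^ 2 + (1 - c)) ^ (-(3 : ℝ)/2))) :=
      continuous_const.mul (stmt7_contg' ha)
    calc ∫ t in Ioc (1:ℝ) 2, f t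
        ≤ ∫ t in Ioc (1:ℝ) 2, 3 * ((t - 1) * ((t - 1) ^ 2 + (1 - c)) ^ (-(3 : ℝ)/2)) := by
          apply setIntegral_mono_on hi3 (hgc.integrableOn_Ioc) measurableSet_Ioc
          exact fun t ht => stmt7_bound3 hc2 ht.1 ht.2
    _ ≤ 3 * (1 - c) ^ (-(1:ℝ)/2) := stmt7_int3 ha
  have hb4 : ∫ t in Ioi (2:ℝ), f t ≤ 8 := by
    calc ∫ t in Ioi (2:ℝ), f t ≤ ∫ t in Ioi (2:ℝ), 16 * t ^ (-(2:ℝ)) := by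
          apply setIntegral_mono_on hi4 hgi4 measurableSet_Ioi
          exact fun t ht => stmt7_bound4 hc2 ht
    _ = 8 := stmt7_int4
  -- combine
  have hA : (1/2 : ℝ) ≤ (1 - c) ^ (-(1:ℝ)/2) := by
    have h1 : (1 - c) ^ ((1:ℝ)/2) ≤ 2 := by
      rw [← Real.sqrt_eq_rpow]
      calc Real.sqrt (1 - c) ≤ Real.sqrt 4 := Real.sqrt_le_sqrt (by linarith)
      _ = 2 := by rw [show (4:ℝ) = 2^2 by norm_num, Real.sqrt_sq (by norm_num : (0:ℝ) ≤ 2)]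
    have hpos : 0 < (1 - c) ^ ((1:ℝ)/2) := Real.rpow_pos_of_pos ha _
    have h2 : (1 - c) ^ (-(1:ℝ)/2) = ((1 - c) ^ ((1:ℝ)/2))⁻¹ := by
      rw [show -(1:ℝ)/2 = -((1:ℝ)/2) by ring, Real.rpow_neg ha.le]
    rw [h2]
    calc (1/2 : ℝ) = (2:ℝ)⁻¹ := by norm_num
    _ ≤ ((1 - c) ^ ((1:ℝ)/2))⁻¹ := by
        apply inv_anti₀ hpos h1
  linarith
end

section
/- There exists a constant C > 0 such that for every c ∈ [−1, 1) and all ξ, ξ' ∈ ℝ, |∫₀^∞ (t^{iξ + 3/2} − t^{iξ' + 3/2}) (t² − 2ct + 1)^{−3/2} dt/t| ≤ C |ξ − ξ'| (1 − c)^{−1/2}. -/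
open MeasureTheory Real Set Filter Topology

lemma L_exp_one (θ : ℝ) : ‖Complex.exp (θ * Complex.I) - 1‖ ≤ |θ| := by
  have h2 : ‖Complex.exp (θ * Complex.I) - 1‖ ^ 2 ≤ |θ| ^ 2 := by
    rw [Complex.sq_norm, Complex.normSq_apply]
    simp only [Complex.sub_re, Complex.sub_im, Complex.exp_ofReal_mul_I_re,
      Complex.exp_ofReal_mul_I_im, Complex.one_re, Complex.one_im]
    have hd : Real.cos (2 * (θ/2)) = 2 * Real.cos (θ/2) ^ 2 - 1 := Real.cos_two_mul _
    rw [show 2 * (θ/2) = θ by ring] at hd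
    have hs : Real.sin (θ/2) ^ 2 ≤ (θ/2) ^ 2 := by
      have h1 := Real.abs_sin_le_abs (x := θ/2)
      nlinarith [abs_nonneg (Real.sin (θ/2)), sq_abs (Real.sin (θ/2)), sq_abs (θ/2)]
    nlinarith [Real.sin_sq_add_cos_sq (θ/2), Real.sin_sq_add_cos_sq θ, sq_abs θ]
  exact (pow_le_pow_iff_left₀ (norm_nonneg _) (abs_nonneg _) two_ne_zero).mp h2

lemma L_exp (x y : ℝ) :
    ‖Complex.exp (x * Complex.I) - Complex.exp (y * Complex.I)‖ ≤ |x - y| := by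
  have h : Complex.exp (x * Complex.I) - Complex.exp (y * Complex.I)
      = Complex.exp (y * Complex.I) * (Complex.exp ((x - y : ℝ) * Complex.I) - 1) := by
    rw [mul_sub, ← Complex.exp_add, mul_one]
    push_cast
    ring_nf
  rw [h, norm_mul, Complex.norm_exp_ofReal_mul_I, one_mul]
  exact L_exp_one _

lemma L_log' (t : ℝ) (ht : 0 < t) : t ^ ((1:ℝ)/2) * |Real.log t| ≤ 2 * |t - 1| := by
  rw [← Real.sqrt_eq_rpow]
  set s := Real.sqrt t with hs
  have hs0 : 0 < s := Real.sqrt_pos.mpr ht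
  have hss : s * s = t := Real.mul_self_sqrt ht.le
  have hlog : Real.log t = 2 * Real.log s := by
    rw [← hss, Real.log_mul hs0.ne' hs0.ne']; ring
  have h1 : Real.log s ≤ s - 1 := Real.log_le_sub_one_of_pos hs0
  have h2 : Real.log s⁻¹ ≤ s⁻¹ - 1 := Real.log_le_sub_one_of_pos (by positivity)
  rw [Real.log_inv] at h2
  rcases le_or_gt 1 t with h | h
  · have hs1 : 1 ≤ s := by nlinarith
    have hl0 : 0 ≤ Real.log t := Real.log_nonneg h
    rw [abs_of_nonneg hl0, abs_of_nonneg (by linarith : (0:ℝ) ≤ t - 1), hlog]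
    nlinarith
  · have hs1 : s < 1 := by nlinarith
    have hl0 : Real.log t ≤ 0 := Real.log_nonpos ht.le h.le
    rw [abs_of_nonpos hl0, abs_of_nonpos (by linarith : t - 1 ≤ 0), hlog]
    have h3 : -Real.log s ≤ s⁻¹ - 1 := h2
    have h4 : s * (-Real.log s) ≤ 1 - s := by
      have := mul_le_mul_of_nonneg_left h3 hs0.le
      rw [mul_sub, mul_inv_cancel₀ hs0.ne'] at this
      linarith
    nlinarith

lemma L_quad (t c : ℝ) (ht : 0 < t) (hc1 : -1 ≤ c) (hc2 : c < 1) :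
    ((t - 1)^2 + (1 - c)) / 9 ≤ t^2 - 2*c*t + 1 := by
  nlinarith [sq_nonneg (t-1), mul_nonneg ht.le (sub_nonneg.mpr hc2.le), sq_nonneg t,
    mul_nonneg (mul_nonneg ht.le ht.le) (sub_nonneg.mpr hc2.le)]

lemma L_deriv (ε : ℝ) (hε : 0 < ε) (x : ℝ) :
    HasDerivAt (fun t : ℝ => -(((t-1)^2+ε) ^ (-(1:ℝ)/2)))
      ((x-1) * ((x-1)^2+ε) ^ (-(3:ℝ)/2)) x := by
  have hf : HasDerivAt (fun t : ℝ => (t-1)^2+ε) (2*(x-1)) x := by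
    have h1 : HasDerivAt (fun t : ℝ => t - 1) 1 x := (hasDerivAt_id x).sub_const 1
    simpa using (h1.pow 2).add_const ε
  have hpos : (0:ℝ) < (x-1)^2+ε := by positivity
  have h2 := (hf.rpow_const (p := -(1:ℝ)/2) (Or.inl hpos.ne')).neg
  have h3 : HasDerivAt (fun t : ℝ => -(((t-1)^2+ε) ^ (-(1:ℝ)/2)))
      (-(2 * (x - 1) * (-(1:ℝ)/2) * ((x - 1) ^ 2 + ε) ^ (-(1:ℝ)/2 - 1))) x := h2
  convert h3 using 1
  rw [show -(1:ℝ)/2 - 1 = -(3:ℝ)/2 by norm_num]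
  ring

lemma L_tendsto (ε : ℝ) (hε : 0 < ε) :
    Tendsto (fun t : ℝ => -(((t-1)^2+ε) ^ (-(1:ℝ)/2))) atTop (𝓝 0) := by
  rw [show (0:ℝ) = -0 by norm_num]
  apply Filter.Tendsto.neg
  have h1 : Tendsto (fun t : ℝ => (t-1)^2+ε) atTop atTop := by
    apply tendsto_atTop_add_const_right
    exact (tendsto_pow_atTop two_ne_zero).comp (tendsto_atTop_add_const_right _ (-1) tendsto_id)
  have h2 : Tendsto (fun y : ℝ => y ^ (-((1:ℝ)/2))) atTop (𝓝 0) :=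
    tendsto_rpow_neg_atTop (by norm_num)
  have := h2.comp h1
  simpa [neg_div, Function.comp_def] using this

lemma L_int (ε : ℝ) (hε : 0 < ε) :
    IntegrableOn (fun t => |t-1| * ((t-1)^2+ε) ^ (-(3:ℝ)/2)) (Set.Ioi (0:ℝ)) ∧
    ∫ t in Set.Ioi (0:ℝ), |t-1| * ((t-1)^2+ε) ^ (-(3:ℝ)/2) ≤ 2 * ε ^ (-(1:ℝ)/2) := by
  set F : ℝ → ℝ := fun t => |t-1| * ((t-1)^2+ε) ^ (-(3:ℝ)/2) with hF
  have hcont : Continuous F := by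
    apply Continuous.mul (by continuity)
    apply Continuous.rpow_const (by continuity)
    intro x; exact Or.inl (by positivity)
  -- piece on Ioi 1
  have heq2 : EqOn F (fun t => (t-1) * ((t-1)^2+ε) ^ (-(3:ℝ)/2)) (Ioi 1) := by
    intro t ht; simp only [F]
    rw [abs_of_nonneg (by simp at ht; linarith : (0:ℝ) ≤ t - 1)]
  have hpos2 : ∀ x ∈ Ioi (1:ℝ), 0 ≤ (x-1) * ((x-1)^2+ε) ^ (-(3:ℝ)/2) := by
    intro x hx; simp at hx
    have : (0:ℝ) ≤ x - 1 := by linarith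
    positivity
  have hint2 : IntegrableOn F (Ioi 1) := by
    apply (integrableOn_Ioi_deriv_of_nonneg' (fun x _ => L_deriv ε hε x) hpos2
      (L_tendsto ε hε)).congr_fun heq2.symm measurableSet_Ioi
  have hval2 : ∫ t in Ioi (1:ℝ), F t = ε ^ (-(1:ℝ)/2) := by
    rw [setIntegral_congr_fun measurableSet_Ioi heq2]
    rw [integral_Ioi_of_hasDerivAt_of_nonneg' (fun x _ => L_deriv ε hε x) hpos2 (L_tendsto ε hε)]
    norm_num
  -- piece on Ioc 0 1
  have hint1 : IntegrableOn F (Ioc 0 1) := hcont.integrableOn_Ioc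
  have hval1 : ∫ t in Ioc (0:ℝ) 1, F t ≤ ε ^ (-(1:ℝ)/2) := by
    have heq1 : EqOn F (fun t => -((t-1) * ((t-1)^2+ε) ^ (-(3:ℝ)/2))) (Ioc 0 1) := by
      intro t ht; simp only [F]
      rw [abs_of_nonpos (by simp at ht; linarith : t - 1 ≤ 0)]; ring
    rw [setIntegral_congr_fun measurableSet_Ioc heq1]
    rw [← intervalIntegral.integral_of_le (by norm_num : (0:ℝ) ≤ 1)]
    have hderiv : ∀ x ∈ uIcc (0:ℝ) 1,
        HasDerivAt (fun t : ℝ => ((t-1)^2+ε) ^ (-(1:ℝ)/2))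
          (-((x-1) * ((x-1)^2+ε) ^ (-(3:ℝ)/2))) x := by
      intro x _
      simpa [Pi.neg_def] using (L_deriv ε hε x).neg
    have hii : IntervalIntegrable (fun x : ℝ => -((x-1) * ((x-1)^2+ε) ^ (-(3:ℝ)/2))) volume 0 1 := by
      apply Continuous.intervalIntegrable
      apply Continuous.neg
      apply Continuous.mul (by continuity)
      apply Continuous.rpow_const (by continuity)
      intro x; exact Or.inl (by positivity)
    rw [intervalIntegral.integral_eq_sub_of_hasDerivAt hderiv hii]
    have h0 : (0:ℝ) ≤ ((1:ℝ)+ε) ^ (-(1:ℝ)/2) := by positivity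
    norm_num
    linarith
  -- combine
  have hunion : Ioc (0:ℝ) 1 ∪ Ioi 1 = Ioi 0 := Ioc_union_Ioi_eq_Ioi (by norm_num)
  have hdisj : Disjoint (Ioc (0:ℝ) 1) (Ioi 1) := Ioc_disjoint_Ioi le_rfl
  constructor
  · rw [← hunion]; exact hint1.union hint2
  · rw [← hunion, setIntegral_union hdisj measurableSet_Ioi hint1 hint2]
    linarith [hval1, hval2.le, hval2.ge]

lemma L_point (c ξ ξ' t : ℝ) (ht : 0 < t) (hc1 : -1 ≤ c) (hc2 : c < 1) :
    ‖((t : ℂ) ^ ((ξ : ℂ) * Complex.I + 3/2) - (t : ℂ) ^ ((ξ' : ℂ) * Complex.I + 3/2)) *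
        (((t ^ 2 - 2 * c * t + 1) ^ (-(3 : ℝ)/2) : ℝ) : ℂ) / (t : ℂ)‖
      ≤ 54 * |ξ - ξ'| * (|t - 1| * ((t - 1)^2 + (1 - c)) ^ (-(3:ℝ)/2)) := by
  have htne : (t : ℂ) ≠ 0 := by exact_mod_cast ht.ne'
  set D : ℝ := t^2 - 2*c*t + 1 with hD
  set a : ℝ := (t-1)^2 + (1-c) with ha
  have ha0 : 0 < a := by have := sub_pos.mpr hc2; positivity
  have hquad : a / 9 ≤ D := L_quad t c ht hc1 hc2
  have hD0 : 0 < D := lt_of_lt_of_le (by positivity) hquad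
  have hr : 0 ≤ D ^ (-(3:ℝ)/2) := Real.rpow_nonneg hD0.le _
  -- split the cpow
  have hsplit : ∀ z : ℝ, (t : ℂ) ^ ((z : ℂ) * Complex.I + 3/2)
      = Complex.exp (((z * Real.log t : ℝ) : ℂ) * Complex.I) * (t : ℂ) ^ (3/2 : ℂ) := by
    intro z
    rw [Complex.cpow_add _ _ htne]
    congr 1
    rw [Complex.cpow_def_of_ne_zero htne, ← Complex.ofReal_log ht.le]
    congr 1
    push_cast
    ring
  have h32 : ‖(t : ℂ) ^ (3/2 : ℂ)‖ = t ^ ((3:ℝ)/2) := by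
    rw [Complex.norm_cpow_eq_rpow_re_of_pos ht]
    norm_num
  have hAB : ‖(t : ℂ) ^ ((ξ : ℂ) * Complex.I + 3/2) - (t : ℂ) ^ ((ξ' : ℂ) * Complex.I + 3/2)‖
      ≤ |ξ - ξ'| * |Real.log t| * t ^ ((3:ℝ)/2) := by
    rw [hsplit ξ, hsplit ξ', ← sub_mul, norm_mul, h32]
    have := L_exp (ξ * Real.log t) (ξ' * Real.log t)
    have heq : |ξ * Real.log t - ξ' * Real.log t| = |ξ - ξ'| * |Real.log t| := by
      rw [← sub_mul, abs_mul]
    gcongr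
    rw [← heq]
    exact this
  have hnorm : ‖((t : ℂ) ^ ((ξ : ℂ) * Complex.I + 3/2) - (t : ℂ) ^ ((ξ' : ℂ) * Complex.I + 3/2)) *
        ((D ^ (-(3 : ℝ)/2) : ℝ) : ℂ) / (t : ℂ)‖
      = ‖(t : ℂ) ^ ((ξ : ℂ) * Complex.I + 3/2) - (t : ℂ) ^ ((ξ' : ℂ) * Complex.I + 3/2)‖
        * D ^ (-(3:ℝ)/2) / t := by
    rw [norm_div, norm_mul, Complex.norm_real, Complex.norm_real]
    rw [Real.norm_eq_abs, Real.norm_eq_abs, abs_of_nonneg hr, abs_of_pos ht]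
  have h9 : ((9:ℝ)) ^ (-(3:ℝ)/2) = 1/27 := by
    rw [show (9:ℝ) = 3 ^ (2:ℕ) by norm_num, ← Real.rpow_natCast 3 2,
      ← Real.rpow_mul (by norm_num : (0:ℝ) ≤ 3)]
    rw [show ((2:ℕ):ℝ) * (-(3:ℝ)/2) = ((-3:ℤ):ℝ) by push_cast; ring, Real.rpow_intCast]
    norm_num
  have hrle : D ^ (-(3:ℝ)/2) ≤ 27 * a ^ (-(3:ℝ)/2) := by
    have h1 : D ^ (-(3:ℝ)/2) ≤ (a/9) ^ (-(3:ℝ)/2) :=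
      Real.rpow_le_rpow_of_nonpos (by positivity) hquad (by norm_num)
    rw [Real.div_rpow ha0.le (by norm_num : (0:ℝ) ≤ 9), h9] at h1
    calc D ^ (-(3:ℝ)/2) ≤ a ^ (-(3:ℝ)/2) / (1/27) := h1
      _ = 27 * a ^ (-(3:ℝ)/2) := by ring
  have ht32 : t ^ ((3:ℝ)/2) = t ^ ((1:ℝ)/2) * t := by
    have h1 : t ^ ((1:ℝ)/2) * t = t ^ ((1:ℝ)/2) * t ^ (1:ℝ) := by rw [Real.rpow_one]
    rw [h1, ← Real.rpow_add ht]
    norm_num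
  calc ‖((t : ℂ) ^ ((ξ : ℂ) * Complex.I + 3/2) - (t : ℂ) ^ ((ξ' : ℂ) * Complex.I + 3/2)) *
        ((D ^ (-(3 : ℝ)/2) : ℝ) : ℂ) / (t : ℂ)‖
      = ‖(t : ℂ) ^ ((ξ : ℂ) * Complex.I + 3/2) - (t : ℂ) ^ ((ξ' : ℂ) * Complex.I + 3/2)‖
        * D ^ (-(3:ℝ)/2) / t := hnorm
    _ ≤ (|ξ - ξ'| * |Real.log t| * t ^ ((3:ℝ)/2)) * D ^ (-(3:ℝ)/2) / t := by gcongr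
    _ = |ξ - ξ'| * (t ^ ((1:ℝ)/2) * |Real.log t|) * D ^ (-(3:ℝ)/2) := by
        rw [ht32]; field_simp
    _ ≤ |ξ - ξ'| * (2 * |t - 1|) * D ^ (-(3:ℝ)/2) := by
        gcongr _ * ?_ * _
        exact L_log' t ht
    _ ≤ |ξ - ξ'| * (2 * |t - 1|) * (27 * a ^ (-(3:ℝ)/2)) := by
        have : (0:ℝ) ≤ |ξ - ξ'| * (2 * |t - 1|) := by positivity
        gcongr
    _ = 54 * |ξ - ξ'| * (|t - 1| * a ^ (-(3:ℝ)/2)) := by ring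


/-- There is `C > 0` such that for every `c ∈ [-1, 1)` and all
`ξ, ξ' ∈ ℝ`,
`|∫₀^∞ (t^{iξ+3/2} - t^{iξ'+3/2}) (t² - 2ct + 1)^{-3/2} dt/t| ≤ C |ξ - ξ'| (1-c)^{-1/2}`. -/
theorem stmt_8 :
    ∃ C > (0 : ℝ), ∀ c ∈ Set.Ico (-1 : ℝ) 1, ∀ ξ ξ' : ℝ,
      ‖∫ t in Set.Ioi (0 : ℝ),
          ((t : ℂ) ^ ((ξ : ℂ) * Complex.I + 3/2) - (t : ℂ) ^ ((ξ' : ℂ) * Complex.I + 3/2)) *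
            (((t ^ 2 - 2 * c * t + 1) ^ (-(3 : ℝ)/2) : ℝ) : ℂ) / (t : ℂ)‖
        ≤ C * |ξ - ξ'| * (1 - c) ^ (-(1 : ℝ)/2) := by
  refine ⟨108, by norm_num, ?_⟩
  rintro c ⟨hc1, hc2⟩ ξ ξ'
  have hε : (0:ℝ) < 1 - c := sub_pos.mpr hc2
  obtain ⟨hInt, hVal⟩ := L_int (1 - c) hε
  have hbound : ∀ t ∈ Set.Ioi (0:ℝ),
      ‖((t : ℂ) ^ ((ξ : ℂ) * Complex.I + 3/2) - (t : ℂ) ^ ((ξ' : ℂ) * Complex.I + 3/2)) *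
          (((t ^ 2 - 2 * c * t + 1) ^ (-(3 : ℝ)/2) : ℝ) : ℂ) / (t : ℂ)‖
        ≤ 54 * |ξ - ξ'| * (|t - 1| * ((t - 1)^2 + (1 - c)) ^ (-(3:ℝ)/2)) :=
    fun t ht => L_point c ξ ξ' t ht hc1 hc2
  calc ‖∫ t in Set.Ioi (0 : ℝ),
          ((t : ℂ) ^ ((ξ : ℂ) * Complex.I + 3/2) - (t : ℂ) ^ ((ξ' : ℂ) * Complex.I + 3/2)) *
            (((t ^ 2 - 2 * c * t + 1) ^ (-(3 : ℝ)/2) : ℝ) : ℂ) / (t : ℂ)‖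
      ≤ ∫ t in Set.Ioi (0 : ℝ),
          ‖((t : ℂ) ^ ((ξ : ℂ) * Complex.I + 3/2) - (t : ℂ) ^ ((ξ' : ℂ) * Complex.I + 3/2)) *
            (((t ^ 2 - 2 * c * t + 1) ^ (-(3 : ℝ)/2) : ℝ) : ℂ) / (t : ℂ)‖ :=
        norm_integral_le_integral_norm _
    _ ≤ ∫ t in Set.Ioi (0 : ℝ),
          (54 * |ξ - ξ'|) * (|t - 1| * ((t - 1)^2 + (1 - c)) ^ (-(3:ℝ)/2)) := by
        apply integral_mono_of_nonneg
        · exact Filter.Eventually.of_forall fun t => norm_nonneg _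
        · exact hInt.const_mul _
        · rw [Filter.EventuallyLE, ae_restrict_iff' measurableSet_Ioi]
          refine Filter.Eventually.of_forall fun t ht => ?_
          have := hbound t ht
          linarith
    _ = (54 * |ξ - ξ'|) * ∫ t in Set.Ioi (0 : ℝ),
          |t - 1| * ((t - 1)^2 + (1 - c)) ^ (-(3:ℝ)/2) := integral_const_mul _ _
    _ ≤ (54 * |ξ - ξ'|) * (2 * (1 - c) ^ (-(1:ℝ)/2)) :=
        mul_le_mul_of_nonneg_left hVal (by positivity)
    _ = 108 * |ξ - ξ'| * (1 - c) ^ (-(1:ℝ)/2) := by ring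
end

section
/- There exists a constant C > 0 such that for every c ∈ [−1, 1) the function h ↦ h^{1/2} (h² − 2ch + 1)^{−3/4} · h^{−1} is integrable on (0, ∞) and ∫₀^∞ h^{1/2} (h² − 2ch + 1)^{−3/4} dh/h ≤ C (1 − c)^{−1/4}. -/
open MeasureTheory Real Set

namespace Stmt9Aux

noncomputable def phi (a : ℝ) (t : ℝ) : ℝ := (t ^ 2 + a) ^ (-(3:ℝ)/4)

lemma phi_nonneg {a : ℝ} (ha : 0 ≤ a) (t : ℝ) : 0 ≤ phi a t :=
  Real.rpow_nonneg (by positivity) _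

lemma phi_meas (a : ℝ) : Measurable (phi a) := by
  unfold phi; fun_prop

lemma phi1_int : Integrable (phi 1) := by
  have h := integrable_rpow_neg_one_add_norm_sq (E := ℝ) (μ := volume) (r := 3/2)
    (by norm_num)
  have he : (fun x : ℝ => ((1:ℝ) + ‖x‖ ^ 2) ^ (-(3/2 : ℝ)/2)) = phi 1 := by
    funext x
    rw [Real.norm_eq_abs, sq_abs, add_comm]
    norm_num [phi]
  rwa [he] at h

lemma phi_scale {a : ℝ} (ha : 0 < a) (t : ℝ) :
    phi a t = a ^ (-(3:ℝ)/4) * phi 1 (t / Real.sqrt a) := by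
  have hsa : (0:ℝ) < Real.sqrt a := Real.sqrt_pos.2 ha
  have h1 : ((t / Real.sqrt a) ^ 2 + 1) = (t ^ 2 + a) / a := by
    rw [div_pow, Real.sq_sqrt ha.le]; field_simp
  rw [phi, phi, h1, Real.div_rpow (by positivity) ha.le]
  rw [eq_comm, mul_div_assoc']
  rw [mul_comm, mul_div_assoc, div_self (by positivity : (a:ℝ) ^ (-(3:ℝ)/4) ≠ 0), mul_one]

lemma phi_int {a : ℝ} (ha : 0 < a) :
    Integrable (phi a) ∧ ∫ t, phi a t = a ^ (-(1:ℝ)/4) * ∫ t, phi 1 t := by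
  have hsa : (0:ℝ) < Real.sqrt a := Real.sqrt_pos.2 ha
  have hfun : phi a = fun t => a ^ (-(3:ℝ)/4) * phi 1 (t / Real.sqrt a) := by
    funext t; exact phi_scale ha t
  constructor
  · rw [hfun]
    exact (phi1_int.comp_div hsa.ne').const_mul _
  · rw [hfun]
    rw [MeasureTheory.integral_const_mul]
    rw [Measure.integral_comp_div (phi 1) (Real.sqrt a)]
    rw [abs_of_pos hsa, smul_eq_mul, ← mul_assoc]
    congr 1
    rw [Real.sqrt_eq_rpow, ← Real.rpow_add ha]
    norm_num

lemma num1 : ((1:ℝ)/4) ^ (-(3:ℝ)/4) ≤ 3 := by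
  have h4 : (((1:ℝ)/4) ^ (-(3:ℝ)/4)) ^ (4:ℕ) = 64 := by
    rw [← Real.rpow_natCast (((1:ℝ)/4) ^ (-(3:ℝ)/4)) 4, ← Real.rpow_mul (by norm_num)]
    have : (-(3:ℝ)/4 * (4:ℕ)) = (-3 : ℤ) := by push_cast; ring
    rw [this, Real.rpow_intCast]
    norm_num
  refine le_of_pow_le_pow_left₀ (n := 4) (by norm_num) (by norm_num) ?_
  rw [h4]; norm_num

lemma num2 : (9:ℝ) ^ ((3:ℝ)/4) ≤ 6 := by
  have h4 : ((9:ℝ) ^ ((3:ℝ)/4)) ^ (4:ℕ) = 729 := by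
    rw [← Real.rpow_natCast ((9:ℝ) ^ ((3:ℝ)/4)) 4, ← Real.rpow_mul (by norm_num)]
    have : ((3:ℝ)/4 * (4:ℕ)) = ((3:ℕ) : ℝ) := by push_cast; ring
    rw [this, Real.rpow_natCast]
    norm_num
  refine le_of_pow_le_pow_left₀ (n := 4) (by norm_num) (by norm_num) ?_
  rw [h4]; norm_num

lemma num3 : ((1:ℝ)/2) ^ (-(1:ℝ)/2) = Real.sqrt 2 := by
  rw [Real.sqrt_eq_rpow, show ((1:ℝ)/2) = 2⁻¹ by norm_num,
    Real.inv_rpow (by norm_num : (0:ℝ) ≤ 2), ← Real.rpow_neg (by norm_num : (0:ℝ) ≤ 2)]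
  norm_num

end Stmt9Aux

open Stmt9Aux

/-- There is `C > 0` such that for every `c ∈ [-1, 1)` the function
`h ↦ h^{1/2} (h² - 2ch + 1)^{-3/4} / h` is integrable on `(0, ∞)` and
`∫₀^∞ h^{1/2} (h² - 2ch + 1)^{-3/4} dh/h ≤ C (1-c)^{-1/4}`. -/
theorem stmt_9 :
    ∃ C > (0 : ℝ), ∀ c ∈ Set.Ico (-1 : ℝ) 1,
      IntegrableOn
        (fun h : ℝ => h ^ ((1 : ℝ)/2) * (h ^ 2 - 2 * c * h + 1) ^ (-(3 : ℝ)/4) / h)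
        (Set.Ioi 0) ∧
      (∫ h in Set.Ioi (0 : ℝ),
          h ^ ((1 : ℝ)/2) * (h ^ 2 - 2 * c * h + 1) ^ (-(3 : ℝ)/4) / h)
        ≤ C * (1 - c) ^ (-(1 : ℝ)/4) := by
  classical
  set I := ∫ t, phi 1 t with hIdef
  set J1 := ∫ h in Ioc (0:ℝ) (1/2), h ^ (-(1:ℝ)/2) with hJ1def
  set J3 := ∫ h in Ioi (3/2:ℝ), h ^ (-(2:ℝ)) with hJ3def
  have hI0 : 0 ≤ I := integral_nonneg (phi_nonneg (by norm_num))
  have hJ10 : 0 ≤ J1 :=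
    setIntegral_nonneg measurableSet_Ioc fun x hx => Real.rpow_nonneg hx.1.le _
  have hJ30 : 0 ≤ J3 :=
    setIntegral_nonneg measurableSet_Ioi fun x hx =>
      Real.rpow_nonneg (le_of_lt (lt_trans (by norm_num) hx)) _
  refine ⟨2 ^ ((1:ℝ)/4) * (3 * J1 + 6 * J3) + Real.sqrt 2 * I + 1, ?_, ?_⟩
  · have h1 : 0 ≤ 2 ^ ((1:ℝ)/4) * (3 * J1 + 6 * J3) :=
      mul_nonneg (Real.rpow_nonneg (by norm_num) _) (by linarith)
    have h2 : 0 ≤ Real.sqrt 2 * I := mul_nonneg (Real.sqrt_nonneg 2) hI0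
    linarith
  intro c hc
  obtain ⟨hc1, hc2⟩ := hc
  set a := 1 - c with hadef
  have ha0 : 0 < a := by rw [hadef]; linarith
  have ha2 : a ≤ 2 := by rw [hadef]; linarith
  set g : ℝ → ℝ := fun h => h ^ (-(1:ℝ)/2) * (h ^ 2 - 2*c*h + 1) ^ (-(3:ℝ)/4) with hgdef
  have hq : ∀ h : ℝ, 0 < h → 0 < h ^ 2 - 2*c*h + 1 := by
    intro h hh; nlinarith [sq_nonneg (h - 1), mul_pos hh (show (0:ℝ) < 1 - c by linarith)]
  have hfg : EqOn (fun h : ℝ => h ^ ((1 : ℝ)/2) * (h ^ 2 - 2 * c * h + 1) ^ (-(3 : ℝ)/4) / h)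
      g (Ioi 0) := by
    intro h hh
    have hh0 : (0:ℝ) < h := hh
    simp only [hgdef]
    rw [mul_div_right_comm]
    congr 1
    rw [show (-(1:ℝ)/2) = (1:ℝ)/2 - 1 by norm_num, Real.rpow_sub hh0, Real.rpow_one]
  have hgmeas : Measurable g := by rw [hgdef]; fun_prop
  have hgnn : ∀ h : ℝ, 0 < h → 0 ≤ g h := fun h hh =>
    mul_nonneg (Real.rpow_nonneg hh.le _) (Real.rpow_nonneg (hq h hh).le _)
  -- Piece 1 : (0, 1/2]
  have hint_half : IntegrableOn (fun h : ℝ => 3 * h ^ (-(1:ℝ)/2)) (Ioc 0 (1/2:ℝ)) := by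
    refine Integrable.const_mul ?_ 3
    exact Iff.mpr integrableOn_Ioc_iff_integrableOn_Ioo
      ((intervalIntegral.integrableOn_Ioo_rpow_iff (by norm_num)).2 (by norm_num))
  have hb1 : ∀ h ∈ Ioc (0:ℝ) (1/2:ℝ), g h ≤ 3 * h ^ (-(1:ℝ)/2) := by
    intro h hh
    have hh0 : (0:ℝ) < h := hh.1
    have hq4 : (1:ℝ)/4 ≤ h ^ 2 - 2*c*h + 1 := by
      nlinarith [mul_nonneg hh0.le (show (0:ℝ) ≤ 1 - c by linarith), hh.2]
    have b : (h ^ 2 - 2*c*h + 1) ^ (-(3:ℝ)/4) ≤ 3 :=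
      le_trans (Real.rpow_le_rpow_of_nonpos (by norm_num) hq4 (by norm_num)) num1
    calc g h ≤ h ^ (-(1:ℝ)/2) * 3 :=
          mul_le_mul_of_nonneg_left b (Real.rpow_nonneg hh0.le _)
      _ = 3 * h ^ (-(1:ℝ)/2) := mul_comm _ _
  have hi1 : IntegrableOn g (Ioc (0:ℝ) (1/2:ℝ)) := by
    refine Integrable.mono' hint_half (hgmeas.aestronglyMeasurable.restrict) ?_
    filter_upwards [ae_restrict_mem measurableSet_Ioc] with h hh
    rw [Real.norm_eq_abs, abs_of_nonneg (hgnn h hh.1)]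
    exact hb1 h hh
  have he1 : (∫ h in Ioc (0:ℝ) (1/2:ℝ), g h) ≤ 3 * J1 := by
    calc (∫ h in Ioc (0:ℝ) (1/2:ℝ), g h)
        ≤ ∫ h in Ioc (0:ℝ) (1/2:ℝ), 3 * h ^ (-(1:ℝ)/2) :=
          setIntegral_mono_on hi1 hint_half measurableSet_Ioc hb1
      _ = 3 * J1 := by rw [MeasureTheory.integral_const_mul]
  -- Piece 3 : (3/2, ∞)
  have hint_two : IntegrableOn (fun h : ℝ => 6 * h ^ (-(2:ℝ))) (Ioi (3/2:ℝ)) :=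
    Integrable.const_mul ((integrableOn_Ioi_rpow_iff (by norm_num)).2 (by norm_num)) 6
  have hb3 : ∀ h ∈ Ioi (3/2:ℝ), g h ≤ 6 * h ^ (-(2:ℝ)) := by
    intro h hh
    have hh32 : (3/2:ℝ) < h := hh
    have hh0 : (0:ℝ) < h := by linarith
    have hq9 : h ^ 2 / 9 ≤ h ^ 2 - 2*c*h + 1 := by
      nlinarith [mul_nonneg (show (0:ℝ) ≤ 2*h - 3 by linarith) (show (0:ℝ) ≤ 4*h - 3 by linarith),
        mul_nonneg hh0.le (show (0:ℝ) ≤ 1 - c by linarith)]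
    have b1 : (h ^ 2 - 2*c*h + 1) ^ (-(3:ℝ)/4) ≤ (h ^ 2 / 9) ^ (-(3:ℝ)/4) :=
      Real.rpow_le_rpow_of_nonpos (by positivity) hq9 (by norm_num)
    have b2 : (h ^ 2 / 9) ^ (-(3:ℝ)/4) = 9 ^ ((3:ℝ)/4) * h ^ (-(3:ℝ)/2) := by
      rw [Real.div_rpow (sq_nonneg h) (by norm_num : (0:ℝ) ≤ 9)]
      rw [← Real.rpow_natCast h 2, ← Real.rpow_mul hh0.le]
      rw [div_eq_mul_inv, ← Real.rpow_neg (by norm_num : (0:ℝ) ≤ 9), mul_comm]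
      norm_num
    calc g h ≤ h ^ (-(1:ℝ)/2) * (9 ^ ((3:ℝ)/4) * h ^ (-(3:ℝ)/2)) :=
          mul_le_mul_of_nonneg_left (b1.trans_eq b2) (Real.rpow_nonneg hh0.le _)
      _ = 9 ^ ((3:ℝ)/4) * h ^ (-(2:ℝ)) := by
          rw [mul_left_comm, ← Real.rpow_add hh0]; norm_num
      _ ≤ 6 * h ^ (-(2:ℝ)) :=
          mul_le_mul_of_nonneg_right num2 (Real.rpow_nonneg hh0.le _)
  have hi3 : IntegrableOn g (Ioi (3/2:ℝ)) := by
    refine Integrable.mono' hint_two (hgmeas.aestronglyMeasurable.restrict) ?_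
    filter_upwards [ae_restrict_mem measurableSet_Ioi] with h hh
    rw [Real.norm_eq_abs, abs_of_nonneg (hgnn h (by have : (3/2:ℝ) < h := hh; linarith))]
    exact hb3 h hh
  have he3 : (∫ h in Ioi (3/2:ℝ), g h) ≤ 6 * J3 := by
    calc (∫ h in Ioi (3/2:ℝ), g h)
        ≤ ∫ h in Ioi (3/2:ℝ), 6 * h ^ (-(2:ℝ)) :=
          setIntegral_mono_on hi3 hint_two measurableSet_Ioi hb3
      _ = 6 * J3 := by rw [MeasureTheory.integral_const_mul]
  -- Piece 2 : (1/2, 3/2]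
  have hshift : Integrable (fun h : ℝ => Real.sqrt 2 * phi a (h - 1)) :=
    ((phi_int ha0).1.comp_sub_right 1).const_mul _
  have hb2 : ∀ h ∈ Ioc (1/2:ℝ) (3/2:ℝ), g h ≤ Real.sqrt 2 * phi a (h - 1) := by
    intro h hh
    have hh0 : (0:ℝ) < h := by have := hh.1; linarith
    have hqa : (h - 1) ^ 2 + a ≤ h ^ 2 - 2*c*h + 1 := by
      rw [hadef]
      nlinarith [mul_nonneg (show (0:ℝ) ≤ 2*h - 1 by have := hh.1; linarith)
        (show (0:ℝ) ≤ 1 - c by linarith)]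
    have b1 : (h ^ 2 - 2*c*h + 1) ^ (-(3:ℝ)/4) ≤ phi a (h - 1) := by
      rw [phi]
      exact Real.rpow_le_rpow_of_nonpos (by positivity) hqa (by norm_num)
    have b2 : h ^ (-(1:ℝ)/2) ≤ Real.sqrt 2 := by
      rw [← num3]
      exact Real.rpow_le_rpow_of_nonpos (by norm_num) hh.1.le (by norm_num)
    exact mul_le_mul b2 b1 (Real.rpow_nonneg (hq h hh0).le _) (Real.sqrt_nonneg 2)
  have hi2 : IntegrableOn g (Ioc (1/2:ℝ) (3/2:ℝ)) := by
    refine Integrable.mono' hshift.integrableOn (hgmeas.aestronglyMeasurable.restrict) ?_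
    filter_upwards [ae_restrict_mem measurableSet_Ioc] with h hh
    rw [Real.norm_eq_abs, abs_of_nonneg (hgnn h (by have := hh.1; linarith))]
    exact hb2 h hh
  have he2 : (∫ h in Ioc (1/2:ℝ) (3/2:ℝ), g h) ≤ Real.sqrt 2 * (a ^ (-(1:ℝ)/4) * I) := by
    calc (∫ h in Ioc (1/2:ℝ) (3/2:ℝ), g h)
        ≤ ∫ h in Ioc (1/2:ℝ) (3/2:ℝ), Real.sqrt 2 * phi a (h - 1) :=
          setIntegral_mono_on hi2 hshift.integrableOn measurableSet_Ioc hb2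
      _ ≤ ∫ h : ℝ, Real.sqrt 2 * phi a (h - 1) :=
          setIntegral_le_integral hshift
            (ae_of_all _ fun t => mul_nonneg (Real.sqrt_nonneg 2) (phi_nonneg ha0.le _))
      _ = Real.sqrt 2 * ∫ h : ℝ, phi a (h - 1) := MeasureTheory.integral_const_mul _ _
      _ = Real.sqrt 2 * ∫ t, phi a t := by rw [integral_sub_right_eq_self (phi a) 1]
      _ = Real.sqrt 2 * (a ^ (-(1:ℝ)/4) * I) := by rw [(phi_int ha0).2]
  -- Combine
  have hdisj1 : Disjoint (Ioc (1/2:ℝ) (3/2:ℝ)) (Ioi (3/2:ℝ)) := by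
    rw [Set.disjoint_left]; intro x hx hx'; exact absurd hx' (not_lt.2 hx.2)
  have hdisj2 : Disjoint (Ioc (0:ℝ) (1/2:ℝ)) (Ioi (1/2:ℝ)) := by
    rw [Set.disjoint_left]; intro x hx hx'; exact absurd hx' (not_lt.2 hx.2)
  have hsplit1 : Ioc (1/2:ℝ) (3/2:ℝ) ∪ Ioi (3/2:ℝ) = Ioi (1/2:ℝ) :=
    Ioc_union_Ioi_eq_Ioi (by norm_num)
  have hsplit2 : Ioc (0:ℝ) (1/2:ℝ) ∪ Ioi (1/2:ℝ) = Ioi (0:ℝ) :=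
    Ioc_union_Ioi_eq_Ioi (by norm_num)
  have hiR : IntegrableOn g (Ioi (1/2:ℝ)) := by rw [← hsplit1]; exact hi2.union hi3
  have hi : IntegrableOn g (Ioi (0:ℝ)) := by rw [← hsplit2]; exact hi1.union hiR
  have heq : (∫ h in Ioi (0:ℝ), g h)
      = (∫ h in Ioc (0:ℝ) (1/2:ℝ), g h)
        + ((∫ h in Ioc (1/2:ℝ) (3/2:ℝ), g h) + ∫ h in Ioi (3/2:ℝ), g h) := by
    rw [← hsplit2, setIntegral_union hdisj2 measurableSet_Ioi hi1 hiR,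
      ← hsplit1, setIntegral_union hdisj1 measurableSet_Ioi hi2 hi3]
  have hA : 1 ≤ 2 ^ ((1:ℝ)/4) * a ^ (-(1:ℝ)/4) := by
    have hd : (2/a : ℝ) ^ ((1:ℝ)/4) = 2 ^ ((1:ℝ)/4) * a ^ (-(1:ℝ)/4) := by
      rw [Real.div_rpow (by norm_num) ha0.le, div_eq_mul_inv,
        ← Real.rpow_neg ha0.le, neg_div]
    rw [← hd]
    calc (1:ℝ) = 1 ^ ((1:ℝ)/4) := (Real.one_rpow _).symm
      _ ≤ (2/a) ^ ((1:ℝ)/4) :=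
        Real.rpow_le_rpow (by norm_num) ((one_le_div ha0).2 ha2) (by norm_num)
  have ht0 : 0 ≤ a ^ (-(1:ℝ)/4) := Real.rpow_nonneg ha0.le _
  constructor
  · exact hi.congr_fun hfg.symm measurableSet_Ioi
  · rw [setIntegral_congr_fun measurableSet_Ioi hfg, heq]
    have hgoal : 3 * J1 + (Real.sqrt 2 * (a ^ (-(1:ℝ)/4) * I) + 6 * J3)
        ≤ (2 ^ ((1:ℝ)/4) * (3 * J1 + 6 * J3) + Real.sqrt 2 * I + 1) * a ^ (-(1:ℝ)/4) := by
      nlinarith [mul_nonneg (show (0:ℝ) ≤ 3*J1 + 6*J3 by linarith)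
        (show (0:ℝ) ≤ 2 ^ ((1:ℝ)/4) * a ^ (-(1:ℝ)/4) - 1 by linarith),
        mul_nonneg (Real.sqrt_nonneg 2) hI0, ht0]
    have := add_le_add he1 (add_le_add he2 he3)
    calc _ ≤ 3 * J1 + (Real.sqrt 2 * (a ^ (-(1:ℝ)/4) * I) + 6 * J3) := this
      _ ≤ _ := by rw [hadef] at hgoal ⊢; exact hgoal
end

section
/- For every α ∈ [0, 1) there exists a constant C > 0 such that for all s' ∈ (0, 1): ∫₀^1 (s/s')^{(1−α)/2} · (s' / |s − s'|^{1/2}) · ds/s ≤ C (s')^{1/2} (1 + |log s'|), and likewise ∫₀^1 (s/s')^{(1−α)/2} · (s' / (s + s')^{1/2}) · ds/s ≤ C (s')^{1/2} (1 + |log s'|). -/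
open MeasureTheory Real intervalIntegral Set

lemma rpow_half_of_neg {x : ℝ} (hx : x < 0) : x ^ ((1:ℝ)/2) = 0 := by
  rw [← Real.sqrt_eq_rpow, Real.sqrt_eq_zero_of_nonpos hx.le]

lemma rpow_neg_half_of_neg {x : ℝ} (hx : x < 0) : x ^ (-((1:ℝ)/2)) = 0 := by
  rw [Real.rpow_def_of_neg hx]
  have : -((1:ℝ)/2) * π = -(π/2) := by ring
  rw [this, Real.cos_neg, Real.cos_pi_div_two, mul_zero]

lemma abs_rpow_neg_half (x : ℝ) :
    |x| ^ (-((1:ℝ)/2)) = x ^ (-((1:ℝ)/2)) + (-x) ^ (-((1:ℝ)/2)) := by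
  rcases lt_trichotomy x 0 with h | h | h
  · rw [abs_of_neg h, rpow_neg_half_of_neg h, zero_add]
  · simp [h, Real.zero_rpow (by norm_num : -((1:ℝ)/2) ≠ 0)]
  · rw [abs_of_pos h, rpow_neg_half_of_neg (by linarith : -x < 0), add_zero]

lemma intervalIntegrable_abs_rpow_neg_half (a b : ℝ) :
    IntervalIntegrable (fun x => |x| ^ (-((1:ℝ)/2))) volume a b := by
  have h1 : IntervalIntegrable (fun x : ℝ => x ^ (-((1:ℝ)/2))) volume a b :=
    intervalIntegral.intervalIntegrable_rpow' (by norm_num)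
  have h2 : IntervalIntegrable (fun x : ℝ => (-x) ^ (-((1:ℝ)/2))) volume a b := by
    have := (intervalIntegral.intervalIntegrable_rpow'
      (a := -a) (b := -b) (by norm_num : (-1:ℝ) < -(1/2)))
    simpa using (IntervalIntegrable.iff_comp_neg (by simp)).mp this
  have he : (fun x : ℝ => |x| ^ (-((1:ℝ)/2)))
      = fun x => x ^ (-((1:ℝ)/2)) + (-x) ^ (-((1:ℝ)/2)) := funext abs_rpow_neg_half
  rw [he]; exact h1.add h2

lemma integral_abs_rpow_neg_half {r : ℝ} (hr : 0 ≤ r) :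
    ∫ x in (-r)..r, |x| ^ (-((1:ℝ)/2)) = 4 * r ^ ((1:ℝ)/2) := by
  have h1 : IntervalIntegrable (fun x : ℝ => x ^ (-((1:ℝ)/2))) volume (-r) r :=
    intervalIntegral.intervalIntegrable_rpow' (by norm_num)
  have h2 : IntervalIntegrable (fun x : ℝ => (-x) ^ (-((1:ℝ)/2))) volume (-r) r := by
    have := (intervalIntegral.intervalIntegrable_rpow'
      (a := r) (b := -r) (by norm_num : (-1:ℝ) < -(1/2)))
    simpa using (IntervalIntegrable.iff_comp_neg (by simp)).mp this
  have key : ∫ x in (-r)..r, x ^ (-((1:ℝ)/2)) = 2 * r ^ ((1:ℝ)/2) := by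
    rw [integral_rpow (Or.inl (by norm_num))]
    have h0 : (-r:ℝ) ^ (-((1:ℝ)/2) + 1) = 0 := by
      rcases eq_or_lt_of_le hr with h | h
      · rw [← h, neg_zero]; exact Real.zero_rpow (by norm_num)
      · rw [show (-((1:ℝ)/2) + 1) = (1:ℝ)/2 by norm_num]
        exact rpow_half_of_neg (by linarith)
    rw [show (-((1:ℝ)/2) + 1) = (1:ℝ)/2 by norm_num] at h0 ⊢
    rw [h0]; ring
  have key2 : ∫ x in (-r)..r, (-x) ^ (-((1:ℝ)/2)) = 2 * r ^ ((1:ℝ)/2) := by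
    rw [intervalIntegral.integral_comp_neg (fun x : ℝ => x ^ (-((1:ℝ)/2)))]
    rw [integral_rpow (Or.inl (by norm_num))]
    have h0 : (-r:ℝ) ^ (-((1:ℝ)/2) + 1) = 0 := by
      rcases eq_or_lt_of_le hr with h | h
      · rw [← h, neg_zero]; exact Real.zero_rpow (by norm_num)
      · rw [show (-((1:ℝ)/2) + 1) = (1:ℝ)/2 by norm_num]
        exact rpow_half_of_neg (by linarith)
    rw [show (-((1:ℝ)/2) + 1) = (1:ℝ)/2 by norm_num] at h0 ⊢
    rw [h0, neg_neg]; ring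
  calc ∫ x in (-r)..r, |x| ^ (-((1:ℝ)/2))
      = ∫ x in (-r)..r, (x ^ (-((1:ℝ)/2)) + (-x) ^ (-((1:ℝ)/2))) := by
        simp_rw [abs_rpow_neg_half]
    _ = 2 * r ^ ((1:ℝ)/2) + 2 * r ^ ((1:ℝ)/2) := by
        rw [intervalIntegral.integral_add h1 h2, key, key2]
    _ = 4 * r ^ ((1:ℝ)/2) := by ring

lemma rpow_combine {s : ℝ} (hs : 0 < s) {p q r : ℝ} (h : p + q = r) :
    s ^ p * s ^ q = s ^ r := by rw [← Real.rpow_add hs, h]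

lemma half_rpow_le {x e : ℝ} (hx : 0 < x) (he : -1 ≤ e) :
    (x/2) ^ e ≤ 2 * x ^ e := by
  rw [Real.div_rpow hx.le (by norm_num)]
  have h2 : (1:ℝ)/2 ≤ (2:ℝ) ^ e := by
    calc (1:ℝ)/2 = 2 ^ (-1:ℝ) := by rw [Real.rpow_neg_one]; norm_num
    _ ≤ 2 ^ e := Real.rpow_le_rpow_of_exponent_le one_le_two he
  rw [div_le_iff₀ (by positivity)]
  nlinarith [Real.rpow_nonneg hx.le e, Real.rpow_pos_of_pos hx e]

lemma measurable_rpow_const (c : ℝ) : Measurable fun x : ℝ => x ^ c := by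
  have h : ∀ x : ℝ, x ^ c = if x = 0 then (0:ℝ) ^ c
      else Real.exp (Real.log x * c) * if 0 ≤ x then 1 else Real.cos (c * π) := by
    intro x
    rcases lt_trichotomy x 0 with h|h|h
    · rw [if_neg h.ne, if_neg (not_le.mpr h), Real.rpow_def_of_neg h]
    · simp [h]
    · rw [if_neg h.ne', if_pos h.le, Real.rpow_def_of_pos h, mul_one]
  rw [funext h]
  refine Measurable.ite (measurableSet_eq) measurable_const ?_
  refine (Real.measurable_exp.comp (Real.measurable_log.mul_const c)).mul ?_
  exact Measurable.ite (measurableSet_le measurable_const measurable_id)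
    measurable_const measurable_const

lemma core {β s' : ℝ} (hβ0 : 0 < β) (hβh : β ≤ 1/2) (hs0 : 0 < s') (hs1 : s' < 1) :
    IntervalIntegrable (fun s => s ^ (β-1) * |s - s'| ^ (-((1:ℝ)/2))) volume 0 1 ∧
    ∫ s in (0:ℝ)..1, s ^ (β-1) * |s - s'| ^ (-((1:ℝ)/2))
      ≤ 2 * s' ^ (β - 1/2) / β + 8 * s' ^ (β - 1/2) + 2 * s' ^ (β - 1/2) * |Real.log s'| := by
  set g : ℝ → ℝ := fun s => s ^ (β-1) * |s - s'| ^ (-((1:ℝ)/2)) with hgdef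
  set a : ℝ := s'/2 with hadef
  set b : ℝ := min (2*s') 1 with hbdef
  have ha0 : 0 < a := by positivity
  have has' : a < s' := by rw [hadef]; linarith
  have hab : a ≤ b := le_min (by linarith) (by linarith)
  have hb1 : b ≤ 1 := min_le_right _ _
  have hb2 : b ≤ 2*s' := min_le_left _ _
  have hs'b : s' ≤ b := le_min (by linarith) hs1.le
  have hgm : Measurable g :=
    (measurable_rpow_const (β-1)).mul
      ((measurable_rpow_const (-((1:ℝ)/2))).comp ((measurable_id.sub_const s').abs))
  have hgnonneg : ∀ s : ℝ, 0 < s → 0 ≤ g s := fun s hs =>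
    mul_nonneg (Real.rpow_nonneg hs.le _) (Real.rpow_nonneg (abs_nonneg _) _)
  have habs_int : ∀ c d : ℝ, IntervalIntegrable (fun s => |s - s'| ^ (-((1:ℝ)/2))) volume c d := by
    intro c d
    have := (intervalIntegrable_abs_rpow_neg_half (c - s') (d - s')).comp_sub_right s'
    simpa using this
  -- Claim A
  have hφA : IntervalIntegrable (fun s : ℝ => a ^ (-((1:ℝ)/2)) * s ^ (β-1)) volume 0 a :=
    (intervalIntegral.intervalIntegrable_rpow' (by linarith)).const_mul _
  have hptA : ∀ s ∈ Icc (0:ℝ) a, g s ≤ a ^ (-((1:ℝ)/2)) * s ^ (β-1) := by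
    intro s hs
    rw [hgdef, mul_comm (a ^ (-((1:ℝ)/2)))]
    refine mul_le_mul_of_nonneg_left ?_ (Real.rpow_nonneg hs.1 _)
    have habs : |s - s'| = s' - s := by
      rw [abs_sub_comm]; exact abs_of_pos (by linarith [hs.2])
    exact Real.rpow_le_rpow_of_nonpos ha0 (by rw [habs]; linarith [hs.2]) (by norm_num)
  have hA_int : IntervalIntegrable g volume 0 a := by
    apply hφA.mono_fun' (hgm.aestronglyMeasurable)
    rw [uIoc_of_le ha0.le]
    refine (ae_restrict_iff' measurableSet_Ioc).mpr (Filter.Eventually.of_forall ?_)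
    intro s hs
    simp only [Real.norm_eq_abs]
    rw [abs_of_nonneg (hgnonneg s hs.1)]
    exact hptA s ⟨hs.1.le, hs.2⟩
  have hA_val : ∫ s in (0:ℝ)..a, g s ≤ 2 * s' ^ (β - 1/2) / β := by
    have h1 : ∫ s in (0:ℝ)..a, g s ≤ ∫ s in (0:ℝ)..a, a ^ (-((1:ℝ)/2)) * s ^ (β-1) :=
      integral_mono_on ha0.le hA_int hφA hptA
    have h2 : ∫ s in (0:ℝ)..a, a ^ (-((1:ℝ)/2)) * s ^ (β-1)
        = a ^ (-((1:ℝ)/2)) * (a ^ β / β) := by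
      rw [intervalIntegral.integral_const_mul,
        integral_rpow (Or.inl (by linarith : (-1:ℝ) < β - 1)),
        (by ring : β - 1 + 1 = β), Real.zero_rpow hβ0.ne']
      ring
    have h3 : a ^ (-((1:ℝ)/2)) * (a ^ β / β) = a ^ (β - 1/2) / β := by
      rw [← mul_div_assoc,
        rpow_combine ha0 (show -((1:ℝ)/2) + β = β - 1/2 by ring)]
    have h4 : a ^ (β - 1/2) ≤ 2 * s' ^ (β - 1/2) := half_rpow_le hs0 (by linarith)
    calc ∫ s in (0:ℝ)..a, g s ≤ a ^ (β - 1/2) / β := by rw [← h3, ← h2]; exact h1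
      _ ≤ 2 * s' ^ (β - 1/2) / β := by gcongr
  -- Claim B
  have hφB : IntervalIntegrable (fun s : ℝ => a ^ (β-1) * |s - s'| ^ (-((1:ℝ)/2))) volume a b :=
    (habs_int a b).const_mul _
  have hptB : ∀ s ∈ Icc a b, g s ≤ a ^ (β-1) * |s - s'| ^ (-((1:ℝ)/2)) := by
    intro s hs
    exact mul_le_mul_of_nonneg_right
      (Real.rpow_le_rpow_of_nonpos ha0 hs.1 (by linarith))
      (Real.rpow_nonneg (abs_nonneg _) _)
  have hB_int : IntervalIntegrable g volume a b := by
    apply hφB.mono_fun' (hgm.aestronglyMeasurable)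
    rw [uIoc_of_le hab]
    refine (ae_restrict_iff' measurableSet_Ioc).mpr (Filter.Eventually.of_forall ?_)
    intro s hs
    simp only [Real.norm_eq_abs]
    rw [abs_of_nonneg (hgnonneg s (ha0.trans hs.1))]
    exact hptB s ⟨hs.1.le, hs.2⟩
  have habs_val : ∫ s in a..b, |s - s'| ^ (-((1:ℝ)/2)) ≤ 4 * s' ^ ((1:ℝ)/2) := by
    have hmono : ∫ s in a..b, |s - s'| ^ (-((1:ℝ)/2))
        ≤ ∫ s in (0:ℝ)..(2*s'), |s - s'| ^ (-((1:ℝ)/2)) := by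
      refine intervalIntegral.integral_mono_interval ha0.le hab hb2
        (Filter.Eventually.of_forall fun s => Real.rpow_nonneg (abs_nonneg _) _)
        (habs_int 0 (2*s'))
    have hcomp : ∫ s in (0:ℝ)..(2*s'), |s - s'| ^ (-((1:ℝ)/2)) = 4 * s' ^ ((1:ℝ)/2) := by
      have := intervalIntegral.integral_comp_sub_right
        (a := 0) (b := 2*s') (fun x : ℝ => |x| ^ (-((1:ℝ)/2))) s'
      rw [this, (by ring : (0:ℝ) - s' = -s'), (by ring : 2*s' - s' = s')]
      exact integral_abs_rpow_neg_half hs0.le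
    rw [← hcomp]; exact hmono
  have hB_val : ∫ s in a..b, g s ≤ 8 * s' ^ (β - 1/2) := by
    have h1 : ∫ s in a..b, g s ≤ ∫ s in a..b, a ^ (β-1) * |s - s'| ^ (-((1:ℝ)/2)) :=
      integral_mono_on hab hB_int hφB hptB
    have h2 : ∫ s in a..b, a ^ (β-1) * |s - s'| ^ (-((1:ℝ)/2))
        = a ^ (β-1) * ∫ s in a..b, |s - s'| ^ (-((1:ℝ)/2)) :=
      intervalIntegral.integral_const_mul _ _
    have h4 : a ^ (β-1) ≤ 2 * s' ^ (β-1) := half_rpow_le hs0 (by linarith)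
    have h5 : a ^ (β-1) * ∫ s in a..b, |s - s'| ^ (-((1:ℝ)/2))
        ≤ (2 * s' ^ (β-1)) * (4 * s' ^ ((1:ℝ)/2)) := by
      apply mul_le_mul h4 habs_val
      · exact intervalIntegral.integral_nonneg hab
          (fun s _ => Real.rpow_nonneg (abs_nonneg _) _)
      · positivity
    have h6 : (2 * s' ^ (β-1)) * (4 * s' ^ ((1:ℝ)/2)) = 8 * s' ^ (β - 1/2) := by
      rw [show (2 * s' ^ (β-1)) * (4 * s' ^ ((1:ℝ)/2)) = 8 * (s' ^ (β-1) * s' ^ ((1:ℝ)/2)) by ring,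
        rpow_combine hs0 (show (β-1) + (1:ℝ)/2 = β - 1/2 by ring)]
    calc ∫ s in a..b, g s ≤ a ^ (β-1) * ∫ s in a..b, |s - s'| ^ (-((1:ℝ)/2)) := h2 ▸ h1
      _ ≤ (2 * s' ^ (β-1)) * (4 * s' ^ ((1:ℝ)/2)) := h5
      _ = 8 * s' ^ (β - 1/2) := h6
  -- Claim C
  have hC : IntervalIntegrable g volume b 1 ∧
      ∫ s in b..1, g s ≤ 2 * s' ^ (β - 1/2) * |Real.log s'| := by
    rcases le_or_gt (2*s') 1 with h2s | h2s
    · have hb : b = 2*s' := min_eq_left h2s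
      have hb0 : 0 < b := by rw [hb]; linarith
      have hφC : IntervalIntegrable (fun s : ℝ => 2 * s' ^ (β - 1/2) * s⁻¹) volume b 1 := by
        apply ContinuousOn.intervalIntegrable
        apply continuousOn_const.mul
        apply ContinuousOn.inv₀ continuousOn_id
        intro x hx
        rw [uIcc_of_le hb1] at hx
        exact (lt_of_lt_of_le hb0 hx.1).ne'
      have hptC : ∀ s ∈ Icc b 1, g s ≤ 2 * s' ^ (β - 1/2) * s⁻¹ := by
        intro s hs
        have hs2 : 2*s' ≤ s := hb ▸ hs.1
        have hsp : 0 < s := lt_of_lt_of_le (by linarith) hs2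
        have habs : |s - s'| = s - s' := abs_of_nonneg (by linarith)
        have step1 : |s - s'| ^ (-((1:ℝ)/2)) ≤ (s/2) ^ (-((1:ℝ)/2)) := by
          apply Real.rpow_le_rpow_of_nonpos (by positivity) (by rw [habs]; linarith) (by norm_num)
        have step2 : (s/2) ^ (-((1:ℝ)/2)) ≤ 2 * s ^ (-((1:ℝ)/2)) :=
          half_rpow_le hsp (by norm_num)
        calc g s ≤ s ^ (β-1) * (2 * s ^ (-((1:ℝ)/2))) :=
              mul_le_mul_of_nonneg_left (step1.trans step2) (Real.rpow_nonneg hsp.le _)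
          _ = 2 * (s ^ (β-1) * s ^ (-((1:ℝ)/2))) := by ring
          _ = 2 * (s ^ (β - 1/2) * s ^ (-1:ℝ)) := by
              rw [rpow_combine hsp (by ring : (β-1) + (-((1:ℝ)/2)) = β - 3/2),
                rpow_combine hsp (by ring : (β-1/2) + (-1:ℝ) = β - 3/2)]
          _ ≤ 2 * (s' ^ (β - 1/2) * s ^ (-1:ℝ)) := by
              apply mul_le_mul_of_nonneg_left ?_ (by norm_num)
              apply mul_le_mul_of_nonneg_right
                (Real.rpow_le_rpow_of_nonpos hs0 (by linarith) (by linarith))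
                (Real.rpow_nonneg hsp.le _)
          _ = 2 * s' ^ (β - 1/2) * s⁻¹ := by rw [Real.rpow_neg_one]; ring
      have hC_int : IntervalIntegrable g volume b 1 := by
        apply hφC.mono_fun' (hgm.aestronglyMeasurable)
        rw [uIoc_of_le hb1]
        refine (ae_restrict_iff' measurableSet_Ioc).mpr (Filter.Eventually.of_forall ?_)
        intro s hs
        simp only [Real.norm_eq_abs]
        rw [abs_of_nonneg (hgnonneg s (hb0.trans hs.1))]
        exact hptC s ⟨hs.1.le, hs.2⟩
      refine ⟨hC_int, ?_⟩
      have h1 : ∫ s in b..1, g s ≤ ∫ s in b..1, 2 * s' ^ (β - 1/2) * s⁻¹ :=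
        integral_mono_on hb1 hC_int hφC hptC
      have h2 : ∫ s in b..1, 2 * s' ^ (β - 1/2) * s⁻¹
          = 2 * s' ^ (β - 1/2) * Real.log (1/b) := by
        rw [intervalIntegral.integral_const_mul, integral_inv]
        rw [uIcc_of_le hb1]
        intro hx
        exact absurd hx.1 (not_le.mpr hb0)
      have h3 : Real.log (1/b) ≤ |Real.log s'| := by
        rw [one_div, Real.log_inv, abs_of_nonpos (Real.log_nonpos hs0.le hs1.le)]
        exact neg_le_neg (Real.log_le_log hs0 hs'b)
      calc ∫ s in b..1, g s ≤ 2 * s' ^ (β - 1/2) * Real.log (1/b) := h2 ▸ h1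
        _ ≤ 2 * s' ^ (β - 1/2) * |Real.log s'| := by
            apply mul_le_mul_of_nonneg_left h3 (by positivity)
    · have hb : b = 1 := min_eq_right h2s.le
      constructor
      · rw [hb, intervalIntegrable_iff, uIoc_of_le le_rfl, Set.Ioc_self]
        exact integrableOn_empty
      · rw [hb, intervalIntegral.integral_same]
        positivity
  -- combine
  have hint : IntervalIntegrable g volume 0 1 := (hA_int.trans hB_int).trans hC.1
  refine ⟨hint, ?_⟩
  have hsplit : ∫ s in (0:ℝ)..1, g s
      = (∫ s in (0:ℝ)..a, g s) + (∫ s in a..b, g s) + (∫ s in b..1, g s) := by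
    rw [intervalIntegral.integral_add_adjacent_intervals hA_int hB_int,
      intervalIntegral.integral_add_adjacent_intervals (hA_int.trans hB_int) hC.1]
  rw [hsplit]
  linarith [hA_val, hB_val, hC.2]

/-- For every `α ∈ [0, 1)` there is `C > 0` such that for all
`s' ∈ (0, 1)`:
`∫₀^1 (s/s')^{(1-α)/2} (s'/|s-s'|^{1/2}) ds/s ≤ C (s')^{1/2} (1 + |log s'|)`, and
likewise with `(s+s')^{1/2}` in place of `|s-s'|^{1/2}` (both integrands being
integrable on `(0,1)`). -/
theorem stmt_10 (α : ℝ) (hα : α ∈ Set.Ico (0 : ℝ) 1) :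
    ∃ C > (0 : ℝ), ∀ s' ∈ Set.Ioo (0 : ℝ) 1,
      (IntegrableOn
          (fun s : ℝ => (s / s') ^ ((1 - α)/2) * (s' / |s - s'| ^ ((1 : ℝ)/2)) / s)
          (Set.Ioo 0 1) ∧
        (∫ s in Set.Ioo (0 : ℝ) 1,
            (s / s') ^ ((1 - α)/2) * (s' / |s - s'| ^ ((1 : ℝ)/2)) / s)
          ≤ C * s' ^ ((1 : ℝ)/2) * (1 + |Real.log s'|)) ∧
      (IntegrableOn
          (fun s : ℝ => (s / s') ^ ((1 - α)/2) * (s' / (s + s') ^ ((1 : ℝ)/2)) / s)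
          (Set.Ioo 0 1) ∧
        (∫ s in Set.Ioo (0 : ℝ) 1,
            (s / s') ^ ((1 - α)/2) * (s' / (s + s') ^ ((1 : ℝ)/2)) / s)
          ≤ C * s' ^ ((1 : ℝ)/2) * (1 + |Real.log s'|)) := by
  obtain ⟨hα0, hα1⟩ := hα
  set β : ℝ := (1 - α)/2 with hβdef
  have hβ0 : 0 < β := by rw [hβdef]; linarith
  have hβh : β ≤ 1/2 := by rw [hβdef]; linarith
  refine ⟨8 + 2/β, by positivity, ?_⟩
  intro s' hs'
  obtain ⟨hs0, hs1⟩ := hs'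
  obtain ⟨hgi, hgv⟩ := core hβ0 hβh hs0 hs1
  set g : ℝ → ℝ := fun s => s ^ (β-1) * |s - s'| ^ (-((1:ℝ)/2)) with hgdef
  -- pointwise identity on Ioo 0 1
  have hEq : ∀ s ∈ Set.Ioo (0:ℝ) 1,
      (s / s') ^ β * (s' / |s - s'| ^ ((1:ℝ)/2)) / s
        = s' ^ (1-β) * (s ^ (β-1) * |s - s'| ^ (-((1:ℝ)/2))) := by
    intro s hs
    have hsp : (0:ℝ) < s := hs.1
    rcases eq_or_ne s s' with h | h
    · subst h
      rw [sub_self, abs_zero, Real.zero_rpow (by norm_num : (1:ℝ)/2 ≠ 0),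
        Real.zero_rpow (by norm_num : -((1:ℝ)/2) ≠ 0), div_zero, mul_zero, zero_div,
        mul_zero, mul_zero]
    · have habs : (0:ℝ) < |s - s'| := abs_pos.mpr (sub_ne_zero.mpr h)
      have h12 : (0:ℝ) < |s - s'| ^ ((1:ℝ)/2) := Real.rpow_pos_of_pos habs _
      rw [Real.div_rpow hsp.le hs0.le, Real.rpow_neg (abs_nonneg _),
        show (1:ℝ) - β = 1 + (-β) by ring, Real.rpow_add hs0, Real.rpow_one,
        show β - 1 = β + (-1) by ring, Real.rpow_add hsp, Real.rpow_neg_one,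
        Real.rpow_neg hs0.le]
      field_simp
  have hgIoc : IntegrableOn g (Set.Ioc 0 1) volume := hgi.1
  have hgIoo : IntegrableOn g (Set.Ioo 0 1) volume := hgIoc.mono_set Set.Ioo_subset_Ioc_self
  have hf1int : IntegrableOn
      (fun s : ℝ => (s / s') ^ β * (s' / |s - s'| ^ ((1:ℝ)/2)) / s) (Set.Ioo 0 1) volume := by
    have h1 : IntegrableOn (fun s : ℝ => s' ^ (1-β) * g s) (Set.Ioo 0 1) volume :=
      hgIoo.const_mul _
    exact h1.congr_fun (fun s hs => (hEq s hs).symm) measurableSet_Ioo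
  have hval1 : (∫ s in Set.Ioo (0:ℝ) 1, (s / s') ^ β * (s' / |s - s'| ^ ((1:ℝ)/2)) / s)
      ≤ (8 + 2/β) * s' ^ ((1:ℝ)/2) * (1 + |Real.log s'|) := by
    have hkey : s' ^ (1-β) * s' ^ (β - 1/2) = s' ^ ((1:ℝ)/2) :=
      rpow_combine hs0 (show (1-β) + (β - 1/2) = (1:ℝ)/2 by ring)
    have hK : (0:ℝ) ≤ s' ^ ((1:ℝ)/2) := Real.rpow_nonneg hs0.le _
    have hLabs : (0:ℝ) ≤ |Real.log s'| := abs_nonneg _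
    have h4 : (4:ℝ) ≤ 2/β := by rw [le_div_iff₀ hβ0]; linarith
    calc (∫ s in Set.Ioo (0:ℝ) 1, (s / s') ^ β * (s' / |s - s'| ^ ((1:ℝ)/2)) / s)
        = ∫ s in Set.Ioo (0:ℝ) 1, s' ^ (1-β) * g s :=
          setIntegral_congr_fun measurableSet_Ioo hEq
      _ = s' ^ (1-β) * ∫ s in Set.Ioo (0:ℝ) 1, g s := integral_const_mul _ _
      _ = s' ^ (1-β) * ∫ s in (0:ℝ)..1, g s := by
          rw [intervalIntegral.integral_of_le zero_le_one, integral_Ioc_eq_integral_Ioo]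
      _ ≤ s' ^ (1-β) * (2 * s' ^ (β - 1/2) / β + 8 * s' ^ (β - 1/2)
            + 2 * s' ^ (β - 1/2) * |Real.log s'|) :=
          mul_le_mul_of_nonneg_left hgv (Real.rpow_nonneg hs0.le _)
      _ = (2/β + 8) * s' ^ ((1:ℝ)/2) + 2 * s' ^ ((1:ℝ)/2) * |Real.log s'| := by
          rw [← hkey]; ring
      _ ≤ (8 + 2/β) * s' ^ ((1:ℝ)/2) * (1 + |Real.log s'|) := by
          nlinarith [mul_nonneg hK hLabs]
  -- second integrand
  have hm2 : Measurable (fun s : ℝ => (s / s') ^ β * (s' / (s + s') ^ ((1:ℝ)/2)) / s) := by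
    refine Measurable.div ?_ measurable_id
    refine Measurable.mul ?_ ?_
    · exact (measurable_rpow_const β).comp (measurable_id.div_const s')
    · exact Measurable.div measurable_const
        ((measurable_rpow_const ((1:ℝ)/2)).comp (measurable_id.add_const s'))
  have hf2nn : ∀ s ∈ Set.Ioo (0:ℝ) 1,
      0 ≤ (s / s') ^ β * (s' / (s + s') ^ ((1:ℝ)/2)) / s := by
    intro s hs
    have hsp : (0:ℝ) < s := hs.1
    apply div_nonneg _ hsp.le
    apply mul_nonneg (Real.rpow_nonneg (by positivity) _)
    exact div_nonneg hs0.le (Real.rpow_nonneg (by positivity) _)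
  have hne : ∀ᵐ s : ℝ ∂volume, s ≠ s' := by
    refine (MeasureTheory.ae_iff).mpr ?_
    simp only [ne_eq, not_not, Set.setOf_eq_eq_singleton]
    exact Real.volume_singleton
  have hle : (fun s : ℝ => (s / s') ^ β * (s' / (s + s') ^ ((1:ℝ)/2)) / s)
      ≤ᵐ[volume.restrict (Set.Ioo (0:ℝ) 1)]
      fun s : ℝ => (s / s') ^ β * (s' / |s - s'| ^ ((1:ℝ)/2)) / s := by
    filter_upwards [ae_restrict_of_ae hne, ae_restrict_mem measurableSet_Ioo] with s hne' hs
    have hsp : (0:ℝ) < s := hs.1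
    have h1 : (0:ℝ) < |s - s'| ^ ((1:ℝ)/2) :=
      Real.rpow_pos_of_pos (abs_pos.mpr (sub_ne_zero.mpr hne')) _
    have h2 : |s - s'| ^ ((1:ℝ)/2) ≤ (s + s') ^ ((1:ℝ)/2) := by
      apply Real.rpow_le_rpow (abs_nonneg _) _ (by norm_num)
      exact abs_le.mpr ⟨by linarith, by linarith⟩
    have hY : s' / (s + s') ^ ((1:ℝ)/2) ≤ s' / |s - s'| ^ ((1:ℝ)/2) := by
      gcongr
    refine (div_le_div_iff_of_pos_right hsp).mpr ?_
    exact mul_le_mul_of_nonneg_left hY (Real.rpow_nonneg (by positivity) _)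
  have hf2int : IntegrableOn
      (fun s : ℝ => (s / s') ^ β * (s' / (s + s') ^ ((1:ℝ)/2)) / s) (Set.Ioo 0 1) volume := by
    apply hf1int.mono' hm2.aestronglyMeasurable
    filter_upwards [hle, ae_restrict_mem measurableSet_Ioo] with s h1 h2
    rw [Real.norm_eq_abs, abs_of_nonneg (hf2nn s h2)]
    exact h1
  have hval2 : (∫ s in Set.Ioo (0:ℝ) 1, (s / s') ^ β * (s' / (s + s') ^ ((1:ℝ)/2)) / s)
      ≤ (8 + 2/β) * s' ^ ((1:ℝ)/2) * (1 + |Real.log s'|) := by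
    refine le_trans ?_ hval1
    exact setIntegral_mono_ae_restrict hf2int hf1int hle
  exact ⟨⟨hf1int, hval1⟩, hf2int, hval2⟩
end
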